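/- arXiv:1901.09341 — 2 statements merged into one kernel-verified Lean document; each statement's English description precedes it below -/
import Mathlib

section
/- The constant 3/2 in the two-dimensional transference theorem is attained: for the 0-symmetric parallelogram □ = Conv(±(1, 3/2), ±(1, -1/2)) ⊂ ℝ^2, whose polar body is □^* = Conv(±(1, 0), ±(-1/2, 1)), one has λ_1(ℤ^2, □) = 1 and λ_2(ℤ^2, □^*) = 3/2, so that λ_1(ℤ^2, □) · λ_2(ℤ^2, □^*) = 3/2. -/
open Pointwise

/-- The dimension of a subset `A ⊆ ℝ^d`: the dimension of the real vector space spanned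
by the difference set `A - A`. -/
noncomputable def setDim {d : ℕ} (A : Set (Fin d → ℝ)) : ℕ :=
  Module.finrank ℝ (Submodule.span ℝ {x : Fin d → ℝ | ∃ a ∈ A, ∃ b ∈ A, x = a - b})

/-- The `i`-th successive minimum of a convex set `K ⊆ ℝ^d` with respect to the lattice
`ℤ^d`: `λ_i(ℤ^d, K) = sup { t ≥ 0 | dim (ℤ^d ∩ tK) < i }`. -/
noncomputable def succMinimum {d : ℕ} (i : ℕ) (K : Set (Fin d → ℝ)) : ℝ :=
  sSup {t : ℝ | 0 ≤ t ∧
    setDim {x : Fin d → ℝ | (∀ j, ∃ z : ℤ, x j = (z : ℝ)) ∧ x ∈ t • K} < i}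

/-- The polar of a `0`-symmetric convex set `K ⊆ ℝ^d`:
`K^* = { y | |⟨y, x⟩| ≤ 1 for all x ∈ K }`. -/
def polarBody {d : ℕ} (K : Set (Fin d → ℝ)) : Set (Fin d → ℝ) :=
  {y | ∀ x ∈ K, |∑ i, y i * x i| ≤ 1}

noncomputable abbrev Kb : Set (Fin 2 → ℝ) :=
  convexHull ℝ {![(1 : ℝ), 3 / 2], ![(-1 : ℝ), -(3 / 2)], ![(1 : ℝ), -(1 / 2)], ![(-1 : ℝ), 1 / 2]}

noncomputable abbrev Qb : Set (Fin 2 → ℝ) :=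
  convexHull ℝ {![(1 : ℝ), 0], ![(-1 : ℝ), 0], ![(-(1 / 2) : ℝ), 1], ![(1 / 2 : ℝ), -1]}

lemma convex_absle (a b c : ℝ) : Convex ℝ {x : Fin 2 → ℝ | |a * x 0 + b * x 1| ≤ c} := by
  intro x hx y hy s t hs ht hst
  simp only [Set.mem_setOf_eq] at hx hy ⊢
  have h : a * (s • x + t • y) 0 + b * (s • x + t • y) 1
      = s * (a * x 0 + b * x 1) + t * (a * y 0 + b * y 1) := by
    simp only [Pi.add_apply, Pi.smul_apply, smul_eq_mul]; ring
  rw [h]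
  calc |s * (a * x 0 + b * x 1) + t * (a * y 0 + b * y 1)|
      ≤ |s * (a * x 0 + b * x 1)| + |t * (a * y 0 + b * y 1)| := abs_add_le _ _
    _ = s * |a * x 0 + b * x 1| + t * |a * y 0 + b * y 1| := by
        rw [abs_mul, abs_mul, abs_of_nonneg hs, abs_of_nonneg ht]
    _ ≤ s * c + t * c := by
        have := abs_nonneg (a * x 0 + b * x 1)
        gcongr
    _ = c := by rw [← add_mul, hst, one_mul]

lemma mem_hull4 {v1 v2 v3 v4 : Fin 2 → ℝ} {c1 c2 c3 c4 : ℝ}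
    (h1 : 0 ≤ c1) (h2 : 0 ≤ c2) (h3 : 0 ≤ c3) (h4 : 0 ≤ c4)
    (hs : c1 + c2 + c3 + c4 = 1) :
    c1 • v1 + c2 • v2 + c3 • v3 + c4 • v4 ∈
      convexHull ℝ ({v1, v2, v3, v4} : Set (Fin 2 → ℝ)) := by
  have hconv := convex_convexHull ℝ ({v1, v2, v3, v4} : Set (Fin 2 → ℝ))
  have key := hconv.sum_mem (t := (Finset.univ : Finset (Fin 4)))
    (w := ![c1, c2, c3, c4]) (z := ![v1, v2, v3, v4])
    (by intro i _; fin_cases i <;> simpa)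
    (by simp [Fin.sum_univ_four, hs])
    (by intro i _; fin_cases i <;> exact subset_convexHull ℝ _ (by simp))
  simpa [Fin.sum_univ_four] using key

lemma hullK_bound (a b c : ℝ)
    (h1 : |a * 1 + b * (3 / 2)| ≤ c) (h2 : |a * 1 + b * (-(1 / 2))| ≤ c) :
    ∀ x ∈ Kb, |a * x 0 + b * x 1| ≤ c := by
  intro x hx
  have hsub : ({![(1 : ℝ), 3 / 2], ![(-1 : ℝ), -(3 / 2)], ![(1 : ℝ), -(1 / 2)],
      ![(-1 : ℝ), 1 / 2]} : Set (Fin 2 → ℝ)) ⊆ {x : Fin 2 → ℝ | |a * x 0 + b * x 1| ≤ c} := by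
    intro v hv
    simp only [Set.mem_insert_iff, Set.mem_singleton_iff] at hv
    rcases hv with rfl | rfl | rfl | rfl <;>
      simp only [Set.mem_setOf_eq, Matrix.cons_val_zero, Matrix.cons_val_one, Matrix.head_cons]
    · exact h1
    · rw [show a * -1 + b * -(3/2) = -(a * 1 + b * (3/2)) by ring, abs_neg]; exact h1
    · exact h2
    · rw [show a * -1 + b * (1/2) = -(a * 1 + b * (-(1/2))) by ring, abs_neg]; exact h2
  exact convexHull_min hsub (convex_absle a b c) hx

lemma hK0 : ∀ x ∈ Kb, |x 0| ≤ 1 := by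
  have := hullK_bound 1 0 1 (by norm_num) (by norm_num)
  intro x hx; simpa using this x hx

lemma hK1 : ∀ x ∈ Kb, |(-1) * x 0 + 2 * x 1| ≤ 2 := by
  have := hullK_bound (-1) 2 2 (by norm_num) (by norm_num)
  intro x hx; simpa using this x hx

lemma hK2 : ∀ x ∈ Kb, |(-1) * x 0 + 1 * x 1| ≤ 3 / 2 := by
  have := hullK_bound (-1) 1 (3/2) (by norm_num [abs_le]) (by norm_num [abs_le])
  intro x hx; simpa using this x hx

lemma zero_mem_Kb : (0 : Fin 2 → ℝ) ∈ Kb := by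
  have := mem_hull4 (v1 := ![(1 : ℝ), 3 / 2]) (v2 := ![(-1 : ℝ), -(3 / 2)])
    (v3 := ![(1 : ℝ), -(1 / 2)]) (v4 := ![(-1 : ℝ), 1 / 2])
    (c1 := 1/2) (c2 := 1/2) (c3 := 0) (c4 := 0)
    (by norm_num) (by norm_num) (by norm_num) (by norm_num) (by norm_num)
  convert this using 1
  funext i; fin_cases i <;> norm_num

lemma e0_mem_Kb : ![(1 : ℝ), 0] ∈ Kb := by
  have := mem_hull4 (v1 := ![(1 : ℝ), 3 / 2]) (v2 := ![(-1 : ℝ), -(3 / 2)])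
    (v3 := ![(1 : ℝ), -(1 / 2)]) (v4 := ![(-1 : ℝ), 1 / 2])
    (c1 := 1/4) (c2 := 0) (c3 := 3/4) (c4 := 0)
    (by norm_num) (by norm_num) (by norm_num) (by norm_num) (by norm_num)
  convert this using 1
  funext i; fin_cases i <;> norm_num

lemma scaled_e0_mem_Kb {u : ℝ} (hu0 : 0 ≤ u) (hu1 : u ≤ 1) : ![u, (0 : ℝ)] ∈ Kb := by
  have hconv := convex_convexHull ℝ
    ({![(1 : ℝ), 3 / 2], ![(-1 : ℝ), -(3 / 2)], ![(1 : ℝ), -(1 / 2)], ![(-1 : ℝ), 1 / 2]} :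
      Set (Fin 2 → ℝ))
  have := hconv e0_mem_Kb zero_mem_Kb hu0 (by linarith : (0:ℝ) ≤ 1 - u) (by ring)
  convert this using 1
  funext i; fin_cases i <;> simp

lemma mem_polar_Kb {y : Fin 2 → ℝ}
    (h : ∀ x ∈ Kb, |y 0 * x 0 + y 1 * x 1| ≤ 1) : y ∈ polarBody Kb := by
  intro x hx
  simpa [Fin.sum_univ_two] using h x hx

lemma polar_Kb_bounds {y : Fin 2 → ℝ} (hy : y ∈ polarBody Kb) :
    |y 0 + 3 / 2 * y 1| ≤ 1 ∧ |y 0 - 1 / 2 * y 1| ≤ 1 := by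
  have hv : (![(1 : ℝ), 3 / 2]) ∈ Kb :=
    subset_convexHull ℝ _ (by simp)
  have hw : (![(1 : ℝ), -(1 / 2)]) ∈ Kb :=
    subset_convexHull ℝ _ (by simp)
  have h1 := hy _ hv
  have h2 := hy _ hw
  simp only [Fin.sum_univ_two, Matrix.cons_val_zero, Matrix.cons_val_one, Matrix.head_cons] at h1 h2
  constructor
  · convert h1 using 2; ring
  · convert h2 using 2; ring

lemma polarEq : polarBody Kb = Qb := by
  apply Set.Subset.antisymm
  · intro y hy
    obtain ⟨ha, hb⟩ := polar_Kb_bounds hy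
    obtain ⟨ha1, ha2⟩ := abs_le.mp ha
    obtain ⟨hb1, hb2⟩ := abs_le.mp hb
    have habs : |y 0 + y 1 / 2| + |y 1| ≤ 1 := by
      rcases abs_cases (y 0 + y 1 / 2) with ⟨e1, _⟩ | ⟨e1, _⟩ <;>
        rcases abs_cases (y 1) with ⟨e2, _⟩ | ⟨e2, _⟩ <;> rw [e1, e2] <;> linarith
    have hy_eq : y = ((|y 0 + y 1 / 2| + (y 0 + y 1 / 2)) / 2
            + (1 - |y 0 + y 1 / 2| - |y 1|) / 2) • ![(1 : ℝ), 0]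
        + ((|y 0 + y 1 / 2| - (y 0 + y 1 / 2)) / 2
            + (1 - |y 0 + y 1 / 2| - |y 1|) / 2) • ![(-1 : ℝ), 0]
        + ((|y 1| + y 1) / 2) • ![(-(1 / 2) : ℝ), 1]
        + ((|y 1| - y 1) / 2) • ![(1 / 2 : ℝ), -1] := by
      funext i
      fin_cases i <;> simp <;> ring
    rw [hy_eq]
    apply mem_hull4
    · have := neg_abs_le (y 0 + y 1 / 2); linarith
    · have := le_abs_self (y 0 + y 1 / 2); linarith
    · have := neg_abs_le (y 1); linarith
    · have := le_abs_self (y 1); linarith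
    · ring
  · apply convexHull_min
    · intro v hv
      simp only [Set.mem_insert_iff, Set.mem_singleton_iff] at hv
      rcases hv with rfl | rfl | rfl | rfl <;> apply mem_polar_Kb <;> intro x hx <;>
        simp only [Matrix.cons_val_zero, Matrix.cons_val_one, Matrix.head_cons]
      · simpa using hK0 x hx
      · have := hK0 x hx
        rw [show (-1 : ℝ) * x 0 + 0 * x 1 = -(x 0) by ring, abs_neg]
        exact this
      · have := hK1 x hx
        rw [show (-(1/2) : ℝ) * x 0 + 1 * x 1 = ((-1) * x 0 + 2 * x 1) / 2 by ring, abs_div,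
          show |(2:ℝ)| = 2 by norm_num, div_le_one (by norm_num)]
        exact this
      · have := hK1 x hx
        rw [show ((1/2) : ℝ) * x 0 + (-1) * x 1 = -(((-1) * x 0 + 2 * x 1) / 2) by ring, abs_neg,
          abs_div, show |(2:ℝ)| = 2 by norm_num, div_le_one (by norm_num)]
        exact this
    · intro y hy z hz s t hs ht hst
      intro x hx
      have h1 := hy x hx
      have h2 := hz x hx
      simp only [Fin.sum_univ_two, Pi.add_apply, Pi.smul_apply, smul_eq_mul] at h1 h2 ⊢
      calc |(s * y 0 + t * z 0) * x 0 + (s * y 1 + t * z 1) * x 1|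
          = |s * (y 0 * x 0 + y 1 * x 1) + t * (z 0 * x 0 + z 1 * x 1)| := by ring_nf
        _ ≤ |s * (y 0 * x 0 + y 1 * x 1)| + |t * (z 0 * x 0 + z 1 * x 1)| := abs_add_le _ _
        _ = s * |y 0 * x 0 + y 1 * x 1| + t * |z 0 * x 0 + z 1 * x 1| := by
            rw [abs_mul, abs_mul, abs_of_nonneg hs, abs_of_nonneg ht]
        _ ≤ s * 1 + t * 1 := by
            have := abs_nonneg (y 0 * x 0 + y 1 * x 1); gcongr
        _ = 1 := by linarith

lemma setDim_eq_zero {A : Set (Fin 2 → ℝ)} (h : ∀ a ∈ A, a = 0) : setDim A = 0 := by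
  unfold setDim
  have hsub : {x : Fin 2 → ℝ | ∃ a ∈ A, ∃ b ∈ A, x = a - b} ⊆ {0} := by
    rintro x ⟨a, ha, b, hb, rfl⟩
    simp [h a ha, h b hb]
  have : Submodule.span ℝ {x : Fin 2 → ℝ | ∃ a ∈ A, ∃ b ∈ A, x = a - b} = ⊥ := by
    rw [← le_bot_iff, Submodule.span_le]
    intro x hx
    simpa using hsub hx
  rw [this]
  exact finrank_bot ℝ _

lemma setDim_le_one {A : Set (Fin 2 → ℝ)} (h : ∀ a ∈ A, a 1 = 0) : setDim A ≤ 1 := by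
  unfold setDim
  have hsub : Submodule.span ℝ {x : Fin 2 → ℝ | ∃ a ∈ A, ∃ b ∈ A, x = a - b}
      ≤ Submodule.span ℝ {![(1 : ℝ), 0]} := by
    rw [Submodule.span_le]
    rintro x ⟨a, ha, b, hb, rfl⟩
    have : a - b = (a 0 - b 0) • (![(1 : ℝ), 0]) := by
      funext j
      fin_cases j <;> simp [h a ha, h b hb]
    rw [this]
    exact Submodule.smul_mem _ _ (Submodule.subset_span rfl)
  calc Module.finrank ℝ (Submodule.span ℝ {x : Fin 2 → ℝ | ∃ a ∈ A, ∃ b ∈ A, x = a - b})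
      ≤ Module.finrank ℝ (Submodule.span ℝ {![(1 : ℝ), 0]}) := Submodule.finrank_mono hsub
    _ ≤ 1 := by
        rw [finrank_span_singleton (by
          intro hc
          have := congrFun hc 0
          simp at this)]

lemma setDim_ge_one {A : Set (Fin 2 → ℝ)} (h0 : (0 : Fin 2 → ℝ) ∈ A)
    (h1 : ![(1 : ℝ), 0] ∈ A) : 1 ≤ setDim A := by
  unfold setDim
  have hmem : ![(1 : ℝ), 0] ∈ {x : Fin 2 → ℝ | ∃ a ∈ A, ∃ b ∈ A, x = a - b} :=
    ⟨![(1 : ℝ), 0], h1, 0, h0, by simp⟩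
  have hsub : Submodule.span ℝ {![(1 : ℝ), 0]}
      ≤ Submodule.span ℝ {x : Fin 2 → ℝ | ∃ a ∈ A, ∃ b ∈ A, x = a - b} := by
    rw [Submodule.span_le]
    rintro x rfl
    exact Submodule.subset_span hmem
  have hne : (![(1 : ℝ), 0]) ≠ 0 := by
    intro hc
    have := congrFun hc 0
    simp at this
  calc 1 = Module.finrank ℝ (Submodule.span ℝ {![(1 : ℝ), 0]}) :=
        (finrank_span_singleton hne).symm
    _ ≤ _ := Submodule.finrank_mono hsub

lemma setDim_ge_two {A : Set (Fin 2 → ℝ)} (h0 : (0 : Fin 2 → ℝ) ∈ A)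
    (h1 : ![(1 : ℝ), 0] ∈ A) (h2 : ![(-1 : ℝ), 1] ∈ A) : 2 ≤ setDim A := by
  unfold setDim
  have hd1 : ![(1 : ℝ), 0] ∈ {x : Fin 2 → ℝ | ∃ a ∈ A, ∃ b ∈ A, x = a - b} :=
    ⟨![(1 : ℝ), 0], h1, 0, h0, by simp⟩
  have hd2 : ![(-1 : ℝ), 1] ∈ {x : Fin 2 → ℝ | ∃ a ∈ A, ∃ b ∈ A, x = a - b} :=
    ⟨![(-1 : ℝ), 1], h2, 0, h0, by simp⟩
  have htop : Submodule.span ℝ {x : Fin 2 → ℝ | ∃ a ∈ A, ∃ b ∈ A, x = a - b} = ⊤ := by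
    rw [eq_top_iff]
    intro x _
    have hx : x = (x 0 + x 1) • ![(1 : ℝ), 0] + x 1 • ![(-1 : ℝ), 1] := by
      funext j
      fin_cases j <;> simp <;> ring
    rw [hx]
    exact Submodule.add_mem _
      (Submodule.smul_mem _ _ (Submodule.subset_span hd1))
      (Submodule.smul_mem _ _ (Submodule.subset_span hd2))
  rw [htop, finrank_top]
  simp [Module.finrank_fintype_fun_eq_card]

lemma int_abs_lt_one {z : ℤ} (h : |(z : ℝ)| < 1) : z = 0 := by
  have h2 := abs_lt.mp h
  have h3 : (-1 : ℤ) < z := by exact_mod_cast h2.1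
  have h4 : z < 1 := by exact_mod_cast h2.2
  omega

lemma key1 {t : ℝ} (ht0 : 0 ≤ t) (ht : t < 1) :
    ∀ x ∈ {x : Fin 2 → ℝ | (∀ j, ∃ z : ℤ, x j = (z : ℝ)) ∧ x ∈ t • Kb}, x = 0 := by
  rintro x ⟨hint, hmem⟩
  obtain ⟨k, hk, hx⟩ := hmem
  have hxj : ∀ j, x j = t * k j := fun j => by rw [← hx]; rfl
  have habs : ∀ j, |x j| < 1 → x j = 0 := by
    intro j hj
    obtain ⟨z, hz⟩ := hint j
    rw [hz] at hj ⊢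
    exact_mod_cast congrArg (fun z : ℤ => (z : ℝ)) (int_abs_lt_one hj)
  have hb0 : |x 0| < 1 := by
    rw [hxj 0, abs_mul, abs_of_nonneg ht0]
    have := hK0 k hk
    nlinarith [abs_nonneg (k 0)]
  have hx0 : x 0 = 0 := habs 0 hb0
  have hb1 : |x 1| < 1 := by
    have h2 := hK1 k hk
    have e1 : |(-1) * x 0 + 2 * x 1| ≤ t * 2 := by
      rw [hxj 0, hxj 1, show (-1) * (t * k 0) + 2 * (t * k 1) = t * ((-1) * k 0 + 2 * k 1) by ring,
        abs_mul, abs_of_nonneg ht0]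
      nlinarith [abs_nonneg ((-1) * k 0 + 2 * k 1)]
    rw [hx0] at e1
    simp only [mul_zero, neg_zero, zero_add] at e1
    rw [abs_mul, show |(2:ℝ)| = 2 by norm_num] at e1
    linarith
  have hx1 : x 1 = 0 := habs 1 hb1
  funext j
  fin_cases j
  · exact hx0
  · exact hx1

lemma key2 {t : ℝ} (ht0 : 0 ≤ t) (ht : t < 3 / 2) :
    ∀ x ∈ {x : Fin 2 → ℝ | (∀ j, ∃ z : ℤ, x j = (z : ℝ)) ∧ x ∈ t • polarBody Kb}, x 1 = 0 := by
  rintro x ⟨hint, hmem⟩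
  obtain ⟨y, hy, hx⟩ := hmem
  have hxj : ∀ j, x j = t * y j := fun j => by rw [← hx]; rfl
  obtain ⟨ha, hb⟩ := polar_Kb_bounds hy
  obtain ⟨z0, hz0⟩ := hint 0
  obtain ⟨z1, hz1⟩ := hint 1
  have ha' : |x 0 + 3 / 2 * x 1| ≤ t := by
    rw [hxj 0, hxj 1, show t * y 0 + 3 / 2 * (t * y 1) = t * (y 0 + 3 / 2 * y 1) by ring,
      abs_mul, abs_of_nonneg ht0]
    nlinarith [abs_nonneg (y 0 + 3 / 2 * y 1)]
  have hb' : |x 0 - 1 / 2 * x 1| ≤ t := by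
    rw [hxj 0, hxj 1, show t * y 0 - 1 / 2 * (t * y 1) = t * (y 0 - 1 / 2 * y 1) by ring,
      abs_mul, abs_of_nonneg ht0]
    nlinarith [abs_nonneg (y 0 - 1 / 2 * y 1)]
  have ha2 := abs_le.mp ha'
  have hb2 := abs_le.mp hb'
  -- |2 x 1| ≤ 2 t < 3, so x 1 ∈ {-1, 0, 1}
  have hx1b : |x 1| < 3 / 2 := by
    rcases abs_cases (x 1) with ⟨e, _⟩ | ⟨e, _⟩ <;> rw [e] <;> linarith
  have hz1b : z1 = -1 ∨ z1 = 0 ∨ z1 = 1 := by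
    rw [hz1] at hx1b
    have h2 := abs_lt.mp hx1b
    have h3 : (-2 : ℤ) < z1 := by exact_mod_cast lt_trans (by norm_num : (-2:ℝ) < -(3/2)) h2.1
    have h4 : z1 < 2 := by exact_mod_cast lt_trans h2.2 (by norm_num : (3/2:ℝ) < 2)
    omega
  rcases hz1b with h | h | h
  · exfalso
    rw [hz1, h] at ha2 hb2
    push_cast at ha2 hb2
    -- x0 - 3/2 ≥ -t > -3/2 so x0 > 0 ; x0 + 1/2 ≤ t < 3/2 so x0 < 1
    have hg : (0 : ℝ) < z0 := by rw [hz0] at ha2; linarith [ha2.1]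
    have hl : (z0 : ℝ) < 1 := by rw [hz0] at hb2; linarith [hb2.2]
    have hg' : (0 : ℤ) < z0 := by exact_mod_cast hg
    have hl' : z0 < 1 := by exact_mod_cast hl
    omega
  · rw [hz1, h]; norm_num
  · exfalso
    rw [hz1, h] at ha2 hb2
    push_cast at ha2 hb2
    have hg : (-1 : ℝ) < z0 := by rw [hz0] at hb2; linarith [hb2.1]
    have hl : (z0 : ℝ) < 0 := by rw [hz0] at ha2; linarith [ha2.2]
    have hg' : (-1 : ℤ) < z0 := by exact_mod_cast hg
    have hl' : z0 < 0 := by exact_mod_cast hl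
    omega

lemma lam1 : succMinimum 1 Kb = 1 := by
  unfold succMinimum
  apply csSup_eq_of_forall_le_of_forall_lt_exists_gt
  · exact ⟨0, le_refl 0, by
      rw [Nat.lt_one_iff]
      exact setDim_eq_zero (key1 le_rfl one_pos)⟩
  · rintro a ⟨ha0, hdim⟩
    by_contra hc
    push_neg at hc
    have ha1 : (1 : ℝ) < a := hc
    have hane : a ≠ 0 := by linarith
    have mem0 : (0 : Fin 2 → ℝ) ∈
        {x : Fin 2 → ℝ | (∀ j, ∃ z : ℤ, x j = (z : ℝ)) ∧ x ∈ a • Kb} := by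
      refine ⟨fun j => ⟨0, by simp⟩, ⟨0, zero_mem_Kb, by simp⟩⟩
    have mem1 : (![(1 : ℝ), 0]) ∈
        {x : Fin 2 → ℝ | (∀ j, ∃ z : ℤ, x j = (z : ℝ)) ∧ x ∈ a • Kb} := by
      constructor
      · intro j
        fin_cases j
        · exact ⟨1, by simp⟩
        · exact ⟨0, by simp⟩
      · refine ⟨![1 / a, 0], scaled_e0_mem_Kb (by positivity)
          (by rw [div_le_one (by linarith)]; linarith), ?_⟩
        funext i
        fin_cases i <;> simp [Pi.smul_apply] <;> field_simp
    have h1 := setDim_ge_one mem0 mem1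
    exact absurd hdim (not_lt.mpr h1)
  · intro w hw
    refine ⟨(max w 0 + 1) / 2, ⟨by positivity, ?_⟩, ?_⟩
    · rw [Nat.lt_one_iff]
      refine setDim_eq_zero (key1 (by positivity) ?_)
      have : max w 0 < 1 := max_lt hw one_pos
      linarith
    · have := le_max_left w 0
      have : w < (max w 0 + 1) / 2 := by
        rcases max_cases w 0 with ⟨e, _⟩ | ⟨e, h2⟩ <;> rw [e] <;> linarith
      exact this

lemma lam2 : succMinimum 2 (polarBody Kb) = 3 / 2 := by
  unfold succMinimum
  apply csSup_eq_of_forall_le_of_forall_lt_exists_gt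
  · exact ⟨0, le_refl 0, lt_of_le_of_lt (setDim_le_one (key2 le_rfl (by norm_num))) one_lt_two⟩
  · rintro a ⟨ha0, hdim⟩
    by_contra hc
    push_neg at hc
    have ha1 : (3 / 2 : ℝ) < a := hc
    have hapos : (0 : ℝ) < a := by linarith
    have mem0 : (0 : Fin 2 → ℝ) ∈
        {x : Fin 2 → ℝ | (∀ j, ∃ z : ℤ, x j = (z : ℝ)) ∧ x ∈ a • polarBody Kb} :=
      ⟨fun j => ⟨0, by simp⟩, ⟨0, fun x _ => by simp, by simp⟩⟩
    have mem1 : (![(1 : ℝ), 0]) ∈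
        {x : Fin 2 → ℝ | (∀ j, ∃ z : ℤ, x j = (z : ℝ)) ∧ x ∈ a • polarBody Kb} := by
      constructor
      · intro j
        fin_cases j
        · exact ⟨1, by simp⟩
        · exact ⟨0, by simp⟩
      · refine ⟨![1 / a, 0], mem_polar_Kb ?_, ?_⟩
        · intro x hx
          have h0 := hK0 x hx
          simp only [Matrix.cons_val_zero, Matrix.cons_val_one, Matrix.head_cons]
          rw [show 1 / a * x 0 + 0 * x 1 = x 0 * (1 / a) by ring, abs_mul,
            abs_of_nonneg (by positivity : (0:ℝ) ≤ 1 / a)]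
          calc |x 0| * (1 / a) ≤ 1 * (1 / a) := by gcongr
            _ ≤ 1 := by rw [one_mul, div_le_one hapos]; linarith
        · funext i
          fin_cases i <;> simp [Pi.smul_apply] <;> field_simp
    have mem2 : (![(-1 : ℝ), 1]) ∈
        {x : Fin 2 → ℝ | (∀ j, ∃ z : ℤ, x j = (z : ℝ)) ∧ x ∈ a • polarBody Kb} := by
      constructor
      · intro j
        fin_cases j
        · exact ⟨-1, by simp⟩
        · exact ⟨1, by simp⟩
      · refine ⟨![-1 / a, 1 / a], mem_polar_Kb ?_, ?_⟩
        · intro x hx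
          have h2 := hK2 x hx
          simp only [Matrix.cons_val_zero, Matrix.cons_val_one, Matrix.head_cons]
          rw [show -1 / a * x 0 + 1 / a * x 1 = ((-1) * x 0 + 1 * x 1) * (1 / a) by ring,
            abs_mul, abs_of_nonneg (by positivity : (0:ℝ) ≤ 1 / a)]
          calc |(-1) * x 0 + 1 * x 1| * (1 / a) ≤ (3 / 2) * (1 / a) := by gcongr
            _ ≤ 1 := by rw [mul_one_div, div_le_one hapos]; linarith
        · funext i
          fin_cases i <;> simp [Pi.smul_apply] <;> field_simp
    have h1 := setDim_ge_two mem0 mem1 mem2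
    exact absurd hdim (not_lt.mpr h1)
  · intro w hw
    refine ⟨(max w 0 + 3 / 2) / 2, ⟨by positivity, ?_⟩, ?_⟩
    · refine lt_of_le_of_lt (setDim_le_one (key2 (by positivity) ?_)) one_lt_two
      have : max w 0 < 3 / 2 := max_lt hw (by norm_num)
      linarith
    · have := le_max_left w 0
      rcases max_cases w 0 with ⟨e, _⟩ | ⟨e, h2⟩ <;> rw [e] <;> linarith

/-- The bound `3/2` in the two-dimensional transference theorem is attained: for the
`0`-symmetric parallelogram `K = Conv(±(1, 3/2), ±(1, -1/2))`, the polar body is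
`K^* = Conv(±(1, 0), ±(-1/2, 1))`, `λ₁(ℤ², K) = 1`, `λ₂(ℤ², K^*) = 3/2`, and hence
`λ₁(ℤ², K) · λ₂(ℤ², K^*) = 3/2`. -/
theorem transference_dim_two_sharp :
    polarBody (convexHull ℝ
        {![(1 : ℝ), 3 / 2], ![(-1 : ℝ), -(3 / 2)], ![(1 : ℝ), -(1 / 2)], ![(-1 : ℝ), 1 / 2]}) =
      convexHull ℝ
        {![(1 : ℝ), 0], ![(-1 : ℝ), 0], ![(-(1 / 2) : ℝ), 1], ![(1 / 2 : ℝ), -1]} ∧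
    succMinimum 1 (convexHull ℝ
        {![(1 : ℝ), 3 / 2], ![(-1 : ℝ), -(3 / 2)], ![(1 : ℝ), -(1 / 2)], ![(-1 : ℝ), 1 / 2]})
      = 1 ∧
    succMinimum 2 (polarBody (convexHull ℝ
        {![(1 : ℝ), 3 / 2], ![(-1 : ℝ), -(3 / 2)], ![(1 : ℝ), -(1 / 2)], ![(-1 : ℝ), 1 / 2]}))
      = 3 / 2 ∧
    succMinimum 1 (convexHull ℝ
        {![(1 : ℝ), 3 / 2], ![(-1 : ℝ), -(3 / 2)], ![(1 : ℝ), -(1 / 2)], ![(-1 : ℝ), 1 / 2]})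
      * succMinimum 2 (polarBody (convexHull ℝ
        {![(1 : ℝ), 3 / 2], ![(-1 : ℝ), -(3 / 2)], ![(1 : ℝ), -(1 / 2)], ![(-1 : ℝ), 1 / 2]}))
      = 3 / 2 := by
  refine ⟨polarEq, lam1, lam2, ?_⟩
  rw [show succMinimum 1 (convexHull ℝ
        {![(1 : ℝ), 3 / 2], ![(-1 : ℝ), -(3 / 2)], ![(1 : ℝ), -(1 / 2)], ![(-1 : ℝ), 1 / 2]}) = 1
      from lam1,
    show succMinimum 2 (polarBody (convexHull ℝ
        {![(1 : ℝ), 3 / 2], ![(-1 : ℝ), -(3 / 2)], ![(1 : ℝ), -(1 / 2)], ![(-1 : ℝ), 1 / 2]}))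
      = 3 / 2 from lam2]
  norm_num
end

section
/- Let □ ⊂ ℝ^2 be a 0-symmetric convex polygon of dimension 2 with ℤ^2 ∩ int(□) = {0} and with at least one lattice point on its boundary (i.e. λ_1(ℤ^2, □) = 1), which is maximal in the sense that every edge of □ contains a lattice point in its relative interior. Choose on each edge F exactly one lattice point u_F in its relative interior, in such a way that -u_F is the point chosen on the opposite edge -F, and let Q be the convex hull of the chosen points. Then there is a change of basis of the lattice ℤ^2 (an element of GL_2(ℤ)) taking Q to either (1) the square with vertices (1,0), (0,1), (-1,0), (0,-1), or (2) the hexagon with vertices (1,0), (0,1), (-1,1), (-1,0), (0,-1), (1,-1). -/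
open Pointwise

/-- The dimension of a subset `A ⊆ ℝ²`: the dimension of the real vector space spanned
by the difference set `A - A`. -/
noncomputable def setDim2 (A : Set (Fin 2 → ℝ)) : ℕ :=
  Module.finrank ℝ (Submodule.span ℝ {x : Fin 2 → ℝ | ∃ a ∈ A, ∃ b ∈ A, x = a - b})

/-- `F` is an edge (one-dimensional exposed face) of the convex polygon `K ⊆ ℝ²`. -/
def IsEdge (K F : Set (Fin 2 → ℝ)) : Prop :=
  ∃ φ : (Fin 2 → ℝ) →ₗ[ℝ] ℝ, φ ≠ 0 ∧
    F = {x ∈ K | ∀ y ∈ K, φ y ≤ φ x} ∧ setDim2 F = 1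

/-- A point of `ℝ²` is a lattice point if all its coordinates are integers. -/
def IsLatticePoint (x : Fin 2 → ℝ) : Prop := ∀ i, ∃ z : ℤ, x i = (z : ℝ)

namespace MPC

set_option linter.unusedVariables false
set_option linter.unnecessarySeqFocus false
set_option linter.unreachableTactic false
set_option linter.unusedTactic false

abbrev V2 := Fin 2 → ℝ

noncomputable def dotL (c : V2) : V2 →ₗ[ℝ] ℝ :=
  c 0 • LinearMap.proj 0 + c 1 • LinearMap.proj 1

lemma dotL_apply (c x : V2) : dotL c x = c 0 * x 0 + c 1 * x 1 := by
  simp [dotL, smul_eq_mul]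

lemma vec_decomp (x : V2) : x = x 0 • ![(1:ℝ),0] + x 1 • ![(0:ℝ),1] := by
  funext i; fin_cases i <;> simp

lemma dotL_ne_zero {c : V2} (hc : c ≠ 0) : dotL c ≠ 0 := by
  intro h
  apply hc
  funext i
  fin_cases i
  · have := congrArg (fun f : V2 →ₗ[ℝ] ℝ => f ![(1:ℝ),0]) h
    simpa [dotL_apply] using this
  · have := congrArg (fun f : V2 →ₗ[ℝ] ℝ => f ![(0:ℝ),1]) h
    simpa [dotL_apply] using this

/-- perpendicular vector -/
def perp (c : V2) : V2 := ![-(c 1), c 0]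

lemma perp_ne_zero {c : V2} (hc : c ≠ 0) : perp c ≠ 0 := by
  intro h
  apply hc
  funext i
  have h0 := congrFun h 0
  have h1 := congrFun h 1
  simp [perp] at h0 h1
  fin_cases i <;> simp [h0, h1]

lemma dotL_perp (c : V2) : dotL (perp c) c = 0 := by
  simp [dotL_apply, perp]; ring

lemma exists_coeff (f : V2 →L[ℝ] ℝ) : ∃ c : V2, (∀ x, f x = dotL c x) := by
  refine ⟨![f ![(1:ℝ),0], f ![(0:ℝ),1]], fun x => ?_⟩
  conv_lhs => rw [vec_decomp x]
  rw [map_add, f.map_smul, f.map_smul]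
  simp [dotL_apply]
  ring

lemma ker_dotL_le {c : V2} (hc : c ≠ 0) :
    LinearMap.ker (dotL c) ≤ Submodule.span ℝ {perp c} := by
  intro x hx
  rw [LinearMap.mem_ker, dotL_apply] at hx
  have hc' : c 0 ≠ 0 ∨ c 1 ≠ 0 := by
    by_contra h
    push_neg at h
    exact hc (funext fun i => by fin_cases i <;> simp [h.1, h.2])
  rcases hc' with h0 | h1
  · refine Submodule.mem_span_singleton.2 ⟨x 1 / c 0, ?_⟩
    funext i; fin_cases i <;> simp [perp] <;> field_simp <;> linarith
  · refine Submodule.mem_span_singleton.2 ⟨-(x 0) / c 1, ?_⟩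
    funext i; fin_cases i <;> simp [perp] <;> field_simp <;> linarith

lemma finrank_ker_dotL_le {c : V2} (hc : c ≠ 0) :
    Module.finrank ℝ (LinearMap.ker (dotL c)) ≤ 1 := by
  have := Submodule.finrank_mono (ker_dotL_le hc)
  rwa [finrank_span_singleton (perp_ne_zero hc)] at this

lemma setDim2_le_one {A : Set V2} {c : V2} (hc : c ≠ 0) {m : ℝ}
    (h : ∀ x ∈ A, dotL c x = m) : setDim2 A ≤ 1 := by
  have hle : Submodule.span ℝ {x : V2 | ∃ a ∈ A, ∃ b ∈ A, x = a - b}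
      ≤ LinearMap.ker (dotL c) := by
    rw [Submodule.span_le]
    rintro x ⟨a, ha, b, hb, rfl⟩
    simp [LinearMap.mem_ker, h a ha, h b hb]
  calc setDim2 A ≤ Module.finrank ℝ (LinearMap.ker (dotL c)) := Submodule.finrank_mono hle
    _ ≤ 1 := finrank_ker_dotL_le hc

lemma setDim2_pos {A : Set V2} {p q : V2} (hp : p ∈ A) (hq : q ∈ A) (hne : p ≠ q) :
    1 ≤ setDim2 A := by
  rw [Nat.one_le_iff_ne_zero]
  intro h0
  rw [setDim2, Submodule.finrank_eq_zero] at h0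
  have : p - q ∈ Submodule.span ℝ {x : V2 | ∃ a ∈ A, ∃ b ∈ A, x = a - b} :=
    Submodule.subset_span ⟨p, hp, q, hq, rfl⟩
  rw [h0] at this
  exact hne (by simpa [sub_eq_zero] using this)

/-- `v` is in the "relative interior" of `F` in a combinatorial sense. -/
def RelP (v : V2) (F : Set V2) : Prop :=
  v ∈ F ∧ ∀ y ∈ F, ∃ y' ∈ F, v ∈ openSegment ℝ y y'

lemma relP_of_intrinsicInterior {v : V2} {F : Set V2}
    (hv : v ∈ intrinsicInterior ℝ F) : RelP v F := by
  have hvF : v ∈ F := intrinsicInterior_subset hv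
  refine ⟨hvF, fun y hy => ?_⟩
  rcases eq_or_ne y v with heq | hyv
  · refine ⟨y, hy, ?_⟩
    rw [heq, openSegment_same]
    exact rfl
  rw [mem_intrinsicInterior] at hv
  obtain ⟨v', hv', hv'c⟩ := hv
  -- get a metric ball in the subtype
  rw [mem_interior_iff_mem_nhds, Metric.mem_nhds_iff] at hv'
  obtain ⟨ε, hε, hball⟩ := hv'
  have hvy : v - y ≠ 0 := sub_ne_zero.2 (Ne.symm hyv)
  have hnorm : ‖v - y‖ > 0 := norm_pos_iff.2 hvy
  set r : ℝ := min (ε / (2 * ‖v - y‖)) 1 with hr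
  have hrpos : 0 < r := lt_min (by positivity) one_pos
  have hrle : r * ‖v - y‖ < ε := by
    have h1 : r ≤ ε / (2 * ‖v - y‖) := min_le_left _ _
    calc r * ‖v - y‖ ≤ (ε / (2 * ‖v - y‖)) * ‖v - y‖ := by nlinarith
      _ = ε / 2 := by field_simp
      _ < ε := by linarith
  -- the point y'' = v + r • (v - y)
  set y'' : V2 := r • (v - y) + v with hy''
  have hyspan : y ∈ affineSpan ℝ F := subset_affineSpan ℝ F hy
  have hvspan : v ∈ affineSpan ℝ F := subset_affineSpan ℝ F hvF
  have hy''span : y'' ∈ affineSpan ℝ F := by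
    have := AffineSubspace.smul_vsub_vadd_mem (affineSpan ℝ F) r hvspan hyspan hvspan
    simpa [vsub_eq_sub, vadd_eq_add] using this
  have hy''F : y'' ∈ F := by
    have hmem : (⟨y'', hy''span⟩ : affineSpan ℝ F) ∈ Metric.ball v' ε := by
      rw [Metric.mem_ball, Subtype.dist_eq, hv'c]
      simp only [dist_eq_norm]
      have : y'' - v = r • (v - y) := by rw [hy'']; abel
      rw [this, norm_smul]
      simpa [abs_of_pos hrpos] using hrle
    exact hball hmem
  refine ⟨y'', hy''F, ?_⟩
  refine ⟨r / (1 + r), 1 / (1 + r), by positivity, by positivity, ?_, ?_⟩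
  · field_simp; ring
  · rw [hy'']
    have h1r : (1 : ℝ) + r ≠ 0 := by positivity
    match_scalars <;> field_simp <;> ring

lemma relP_neg {v : V2} {F : Set V2} (h : RelP v F) : RelP (-v) (-F) := by
  obtain ⟨hvF, hseg⟩ := h
  refine ⟨by simpa using hvF, fun y hy => ?_⟩
  obtain ⟨y', hy', a, b, ha, hb, hab, hcomb⟩ := hseg (-y) (by simpa using hy)
  refine ⟨-y', by simpa using hy', a, b, ha, hb, hab, ?_⟩
  rw [← hcomb]
  module

/-- The argmax set of a linear functional on `S`. -/
def MaxSet (S : Set V2) (ψ : V2 →ₗ[ℝ] ℝ) : Set V2 :=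
  {x ∈ S | ∀ y ∈ S, ψ y ≤ ψ x}

variable {S : Set V2}

/-- L5 : if the relative-interior-style point of `F` is in an argmax set, the whole of `F` is. -/
lemma face_subset_maxSet {F : Set V2} {v : V2} (hFS : F ⊆ S) (hrel : RelP v F)
    {ψ : V2 →ₗ[ℝ] ℝ} (hv : v ∈ MaxSet S ψ) : F ⊆ MaxSet S ψ := by
  intro y hy
  obtain ⟨y', hy', a, b, ha, hb, hab, hcomb⟩ := hrel.2 y hy
  have hyle : ψ y ≤ ψ v := hv.2 y (hFS hy)
  have hy'le : ψ y' ≤ ψ v := hv.2 y' (hFS hy')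
  have heq : ψ y = ψ v := by
    by_contra hne
    have hlt : ψ y < ψ v := lt_of_le_of_ne hyle hne
    have hvv : ψ v = a * ψ y + b * ψ y' := by
      rw [← hcomb]; simp [smul_eq_mul]
    have h3 : a * ψ v + b * ψ v = ψ v := by rw [← add_mul, hab, one_mul]
    nlinarith [mul_lt_mul_of_pos_left hlt ha, mul_le_mul_of_nonneg_left hy'le hb.le]
  exact ⟨hFS hy, fun z hz => heq ▸ hv.2 z hz⟩

/-- membership of an edge's argmax representation -/
lemma edge_rep {F : Set V2} (hF : IsEdge S F) :
    ∃ φ : V2 →ₗ[ℝ] ℝ, φ ≠ 0 ∧ F = MaxSet S φ := by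
  obtain ⟨φ, hφ, hrep, _⟩ := hF
  exact ⟨φ, hφ, hrep⟩

lemma edge_subset {F : Set V2} (hF : IsEdge S F) : F ⊆ S := by
  obtain ⟨φ, hφ, rfl, -⟩ := hF
  exact fun x hx => hx.1

/-- an argmax set of a nonzero functional misses the interior -/
lemma maxSet_disjoint_interior {ψ : V2 →ₗ[ℝ] ℝ} (hψ : ψ ≠ 0) {x : V2}
    (hx : x ∈ MaxSet S ψ) : x ∉ interior S := by
  intro hxi
  obtain ⟨d, hd⟩ : ∃ d : V2, ψ d > 0 := by
    obtain ⟨d0, hd0⟩ : ∃ d0, ψ d0 ≠ 0 := by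
      by_contra h
      push_neg at h
      exact hψ (LinearMap.ext fun z => by simp [h z])
    rcases lt_or_gt_of_ne hd0 with hneg | hpos
    · exact ⟨-d0, by simp only [map_neg]; linarith⟩
    · exact ⟨d0, hpos⟩
  have hd0 : d ≠ 0 := by rintro rfl; simp at hd
  rw [mem_interior_iff_mem_nhds, Metric.mem_nhds_iff] at hxi
  obtain ⟨ε, hε, hball⟩ := hxi
  set z : V2 := x + (ε / (2 * ‖d‖)) • d with hz
  have hzS : z ∈ S := by
    apply hball
    rw [Metric.mem_ball, dist_eq_norm]
    have : z - x = (ε / (2 * ‖d‖)) • d := by rw [hz]; abel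
    rw [this, norm_smul]
    have hdn : ‖d‖ > 0 := norm_pos_iff.2 hd0
    rw [Real.norm_eq_abs, abs_of_pos (by positivity)]
    calc ε / (2 * ‖d‖) * ‖d‖ = ε / 2 := by field_simp
      _ < ε := by linarith
  have := hx.2 z hzS
  rw [hz] at this
  simp only [map_add, map_smul, smul_eq_mul] at this
  have hdn : ‖d‖ > 0 := norm_pos_iff.2 hd0
  have hc : ε / (2 * ‖d‖) > 0 := by positivity
  nlinarith [mul_pos hc hd]

lemma edge_not_interior {F : Set V2} (hF : IsEdge S F) {x : V2} (hx : x ∈ F) :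
    x ∉ interior S := by
  obtain ⟨φ, hφ, hrep⟩ := edge_rep hF
  exact maxSet_disjoint_interior hφ (hrep ▸ hx)

/-- negation of an argmax set (for symmetric S) -/
lemma neg_maxSet (hsymm : S = -S) (ψ : V2 →ₗ[ℝ] ℝ) :
    -(MaxSet S ψ) = MaxSet S (-ψ) := by
  ext x
  simp only [Set.mem_neg, MaxSet, Set.mem_setOf_eq, LinearMap.neg_apply, neg_le_neg_iff]
  constructor
  · rintro ⟨hxS, hmax⟩
    have hxS' : x ∈ S := by rw [hsymm]; exact Set.mem_neg.2 (by simpa using hxS)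
    refine ⟨hxS', fun y hy => ?_⟩
    have : -y ∈ S := by rw [hsymm]; exact Set.mem_neg.2 (by simpa using hy)
    have := hmax (-y) this
    simp only [map_neg] at this ⊢
    linarith
  · rintro ⟨hxS, hmax⟩
    have hxS' : -x ∈ S := by rw [hsymm]; exact Set.mem_neg.2 (by simpa using hxS)
    refine ⟨hxS', fun y hy => ?_⟩
    have : -y ∈ S := by rw [hsymm]; exact Set.mem_neg.2 (by simpa using hy)
    have := hmax (-y) this
    simp only [map_neg] at this ⊢
    linarith

lemma diff_set_neg (F : Set V2) :
    {x : V2 | ∃ a ∈ -F, ∃ b ∈ -F, x = a - b} = {x : V2 | ∃ a ∈ F, ∃ b ∈ F, x = a - b} := by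
  ext x
  constructor
  · rintro ⟨a, ha, b, hb, rfl⟩
    exact ⟨-b, by simpa using hb, -a, by simpa using ha, by abel⟩
  · rintro ⟨a, ha, b, hb, rfl⟩
    exact ⟨-b, by simpa using hb, -a, by simpa using ha, by abel⟩

lemma setDim2_neg (F : Set V2) : setDim2 (-F) = setDim2 F := by
  unfold setDim2
  rw [diff_set_neg]

lemma neg_edge (hsymm : S = -S) {F : Set V2} (hF : IsEdge S F) : IsEdge S (-F) := by
  obtain ⟨φ, hφ, hrep, hdim⟩ := hF
  refine ⟨-φ, by simpa using hφ, ?_, ?_⟩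
  · rw [hrep]
    exact neg_maxSet hsymm φ
  · rw [setDim2_neg, hdim]


lemma support_exists (hconv : Convex ℝ S) (h0 : 0 ∈ interior S)
    {z : V2} (hzS : z ∈ S) (hz : z ∉ interior S) :
    ∃ c : V2, c ≠ 0 ∧ z ∈ MaxSet S (dotL c) := by
  obtain ⟨f, hf⟩ := geometric_hahn_banach_open_point hconv.interior isOpen_interior hz
  have hfz : 0 < f z := by simpa using hf 0 h0
  have hmax : ∀ y ∈ S, f y ≤ f z := by
    intro y hy
    by_contra hgt
    push_neg at hgt
    have hfy : 0 < f y := lt_trans hfz hgt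
    set t : ℝ := (f y - f z) / (2 * f y) with ht
    have ht0 : 0 < t := div_pos (by linarith) (by positivity)
    have ht1 : t < 1 := by
      rw [ht, div_lt_one (by positivity)]
      linarith
    have hmem : t • (0:V2) + (1 - t) • y ∈ interior S :=
      hconv.combo_interior_self_mem_interior h0 hy ht0 (by linarith) (by ring)
    have := hf _ hmem
    rw [map_add, f.map_smul, f.map_smul] at this
    simp only [map_zero, smul_eq_mul, mul_zero, zero_add] at this
    rw [ht] at this
    have h2 : (1 - (f y - f z) / (2 * f y)) * f y = (f y + f z) / 2 := by
      field_simp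
      ring
    rw [h2] at this
    linarith
  obtain ⟨c, hc⟩ := exists_coeff f
  refine ⟨c, ?_, hzS, fun y hy => by rw [← hc, ← hc]; exact hmax y hy⟩
  intro hc0
  rw [hc0] at hc
  have := hc z
  rw [dotL_apply] at this
  simp at this
  linarith

lemma combo_int (hconv : Convex ℝ S) (hsymm : S = -S) (h0 : 0 ∈ interior S)
    {a b : V2} (ha : a ∈ S) (hb : b ∈ S) {α β : ℝ} (hs : |α| + |β| < 1) :
    α • a + β • b ∈ interior S := by
  have hnegmem : ∀ x ∈ S, -x ∈ S := by
    intro x hx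
    rw [hsymm]
    simpa using hx
  set s := |α| + |β| with hsdef
  rcases eq_or_lt_of_le (abs_nonneg α) with hα0 | hαpos
  · rcases eq_or_lt_of_le (abs_nonneg β) with hβ0 | hβpos
    · have : α = 0 := abs_eq_zero.1 hα0.symm
      have h2 : β = 0 := abs_eq_zero.1 hβ0.symm
      simpa [this, h2] using h0
    · -- α = 0, β ≠ 0
      have hα : α = 0 := abs_eq_zero.1 hα0.symm
      have hβs : |β| < 1 := by
        have := hs
        rw [hsdef, ← hα0, zero_add] at this
        exact this
      set b' : V2 := if 0 ≤ β then b else -b with hb'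
      have hb'S : b' ∈ S := by
        rw [hb']; split_ifs; exacts [hb, hnegmem b hb]
      have : |β| • b' + (1 - |β|) • (0:V2) ∈ interior S :=
        hconv.combo_self_interior_mem_interior hb'S h0 (abs_nonneg β) (by linarith) (by ring)
      have heq : α • a + β • b = |β| • b' + (1 - |β|) • (0:V2) := by
        rw [hα, hb']
        split_ifs with hsign
        · rw [abs_of_nonneg hsign]; module
        · rw [abs_of_neg (not_le.1 hsign)]; module
      rw [heq]
      exact this
  · -- α ≠ 0
    set a' : V2 := if 0 ≤ α then a else -a with ha'
    set b' : V2 := if 0 ≤ β then b else -b with hb'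
    have ha'S : a' ∈ S := by rw [ha']; split_ifs; exacts [ha, hnegmem a ha]
    have hb'S : b' ∈ S := by rw [hb']; split_ifs; exacts [hb, hnegmem b hb]
    have hspos : 0 < s := by rw [hsdef]; positivity
    have hh : (|α| / s) • a' + (|β| / s) • b' ∈ S := by
      apply hconv ha'S hb'S (by positivity) (by positivity)
      field_simp
      exact hsdef.symm
    have hmem : s • ((|α| / s) • a' + (|β| / s) • b') + (1 - s) • (0:V2) ∈ interior S :=
      hconv.combo_self_interior_mem_interior hh h0 hspos.le (by linarith) (by ring)
    have heq : α • a + β • b = s • ((|α| / s) • a' + (|β| / s) • b') + (1 - s) • (0:V2) := by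
      have h1 : s • ((|α| / s) • a' + (|β| / s) • b') = |α| • a' + |β| • b' := by
        rw [smul_add, smul_smul, smul_smul]
        rw [mul_div_cancel₀ _ hspos.ne', mul_div_cancel₀ _ hspos.ne']
      rw [h1, ha', hb']
      split_ifs with h1s h2s h2s
      · rw [abs_of_nonneg h1s, abs_of_nonneg h2s]; module
      · rw [abs_of_nonneg h1s, abs_of_neg (not_le.1 h2s)]; module
      · rw [abs_of_neg (not_le.1 h1s), abs_of_nonneg h2s]; module
      · rw [abs_of_neg (not_le.1 h1s), abs_of_neg (not_le.1 h2s)]; module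
    rw [heq]
    exact hmem

/-- The difference-span of a set. -/
noncomputable def DF (A : Set V2) : Submodule ℝ V2 :=
  Submodule.span ℝ {x : V2 | ∃ a ∈ A, ∃ b ∈ A, x = a - b}

lemma setDim2_eq_finrank_DF (A : Set V2) : setDim2 A = Module.finrank ℝ (DF A) := rfl

lemma DF_le_ker {A : Set V2} {ψ : V2 →ₗ[ℝ] ℝ} {m : ℝ} (h : ∀ x ∈ A, ψ x = m) :
    DF A ≤ LinearMap.ker ψ := by
  rw [DF, Submodule.span_le]
  rintro x ⟨a, ha, b, hb, rfl⟩
  simp [LinearMap.mem_ker, h a ha, h b hb]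


/-- Key geometric lemma: a proper signed combination of relative interior points of two
distinct non-opposite edges lies in the interior. -/
lemma seg_int (hconv : Convex ℝ S) (hsymm : S = -S) (h0 : 0 ∈ interior S)
    {Fa Fb : Set V2} (hFa : IsEdge S Fa) (hFb : IsEdge S Fb)
    (hne : Fb ≠ Fa) (hnne : Fb ≠ -Fa)
    {va wb : V2} (hva : RelP va Fa) (hwb : RelP wb Fb)
    {α β : ℝ} (hα : α ≠ 0) (hβ : β ≠ 0) (hsum : |α| + |β| = 1) :
    α • va + β • wb ∈ interior S := by
  have hnegmem : ∀ x ∈ S, -x ∈ S := fun x hx => by rw [hsymm]; simpa using hx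
  have hvaS : va ∈ S := edge_subset hFa hva.1
  have hwbS : wb ∈ S := edge_subset hFb hwb.1
  -- the point z is in S
  set z : V2 := α • va + β • wb with hz
  have hzS : z ∈ S := by
    set a' : V2 := if 0 ≤ α then va else -va with ha'
    set b' : V2 := if 0 ≤ β then wb else -wb with hb'
    have ha'S : a' ∈ S := by rw [ha']; split_ifs; exacts [hvaS, hnegmem va hvaS]
    have hb'S : b' ∈ S := by rw [hb']; split_ifs; exacts [hwbS, hnegmem wb hwbS]
    have hmem : |α| • a' + |β| • b' ∈ S :=
      hconv ha'S hb'S (abs_nonneg α) (abs_nonneg β) hsum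
    have heq : z = |α| • a' + |β| • b' := by
      rw [hz, ha', hb']
      split_ifs with h1s h2s h2s
      · rw [abs_of_nonneg h1s, abs_of_nonneg h2s]
      · rw [abs_of_nonneg h1s, abs_of_neg (not_le.1 h2s)]; module
      · rw [abs_of_neg (not_le.1 h1s), abs_of_nonneg h2s]; module
      · rw [abs_of_neg (not_le.1 h1s), abs_of_neg (not_le.1 h2s)]; module
    rw [heq]; exact hmem
  by_contra hzint
  obtain ⟨c, hc, hzmax⟩ := support_exists hconv h0 hzS hzint
  set ψ := dotL c with hψ
  set M := ψ z with hM
  have hbound : ∀ x ∈ S, ψ x ≤ M := fun x hx => hzmax.2 x hx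
  have habs : ∀ x ∈ S, -x ∈ S → |ψ x| ≤ M := by
    intro x hx hnx
    rw [abs_le]
    constructor
    · have := hbound (-x) hnx
      rw [map_neg] at this
      linarith
    · exact hbound x hx
  have habsva : |ψ va| ≤ M := habs va hvaS (hnegmem va hvaS)
  have habswb : |ψ wb| ≤ M := habs wb hwbS (hnegmem wb hwbS)
  have hMsum : α * ψ va + β * ψ wb = M := by
    rw [hM, hz]; simp [smul_eq_mul]
  have h1 : α * ψ va ≤ |α| * M := by
    calc α * ψ va ≤ |α * ψ va| := le_abs_self _
      _ = |α| * |ψ va| := abs_mul _ _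
      _ ≤ |α| * M := mul_le_mul_of_nonneg_left habsva (abs_nonneg α)
  have h2 : β * ψ wb ≤ |β| * M := by
    calc β * ψ wb ≤ |β * ψ wb| := le_abs_self _
      _ = |β| * |ψ wb| := abs_mul _ _
      _ ≤ |β| * M := mul_le_mul_of_nonneg_left habswb (abs_nonneg β)
  have hsplit : |α| * M + |β| * M = M := by rw [← add_mul, hsum, one_mul]
  have heq1 : α * ψ va = |α| * M := by linarith
  have heq2 : β * ψ wb = |β| * M := by linarith
  -- the signs
  have hsigna : ∃ εa : ℝ, (εa = 1 ∨ εa = -1) ∧ ψ va = εa * M := by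
    rcases lt_or_gt_of_ne hα with hneg | hpos
    · refine ⟨-1, Or.inr rfl, ?_⟩
      rw [abs_of_neg hneg] at heq1
      have : α * ψ va = α * (-1 * M) := by rw [heq1]; ring
      exact mul_left_cancel₀ hα this
    · refine ⟨1, Or.inl rfl, ?_⟩
      rw [abs_of_pos hpos] at heq1
      have : α * ψ va = α * (1 * M) := by rw [heq1]; ring
      exact mul_left_cancel₀ hα this
  have hsignb : ∃ εb : ℝ, (εb = 1 ∨ εb = -1) ∧ ψ wb = εb * M := by
    rcases lt_or_gt_of_ne hβ with hneg | hpos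
    · refine ⟨-1, Or.inr rfl, ?_⟩
      rw [abs_of_neg hneg] at heq2
      have : β * ψ wb = β * (-1 * M) := by rw [heq2]; ring
      exact mul_left_cancel₀ hβ this
    · refine ⟨1, Or.inl rfl, ?_⟩
      rw [abs_of_pos hpos] at heq2
      have : β * ψ wb = β * (1 * M) := by rw [heq2]; ring
      exact mul_left_cancel₀ hβ this
  obtain ⟨εa, hεa, hψva⟩ := hsigna
  obtain ⟨εb, hεb, hψwb⟩ := hsignb
  -- in each case, the whole edge has constant ψ value εa*M resp εb*M
  have edge_const : ∀ (F : Set V2), IsEdge S F → ∀ (v : V2), RelP v F →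
      ∀ (ε : ℝ), (ε = 1 ∨ ε = -1) → ψ v = ε * M → ∀ x ∈ F, ψ x = ε * M := by
    intro F hF v hrel ε hε hψv x hx
    rcases hε with rfl | rfl
    · have hψvM : ψ v = M := by rw [hψv, one_mul]
      have hvmax : v ∈ MaxSet S ψ :=
        ⟨edge_subset hF hrel.1, fun y hy => by rw [hψvM]; exact hbound y hy⟩
      have hxmax := face_subset_maxSet (edge_subset hF) hrel hvmax hx
      have h1 := hxmax.2 v (edge_subset hF hrel.1)
      have h2 := hvmax.2 x (edge_subset hF hx)
      rw [one_mul, ← hψvM]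
      linarith
    · -- ε = -1 : v minimizes ψ, i.e. maximizes -ψ
      have hvmax : v ∈ MaxSet S (-ψ) := by
        refine ⟨edge_subset hF hrel.1, fun y hy => ?_⟩
        simp only [LinearMap.neg_apply, neg_le_neg_iff]
        have := hbound (-y) (hnegmem y hy)
        rw [map_neg] at this
        rw [hψv]
        linarith
      have := face_subset_maxSet (edge_subset hF) hrel hvmax hx
      have h1 := this.2 v (edge_subset hF hrel.1)
      have h2 := hvmax.2 x (edge_subset hF hx)
      simp only [LinearMap.neg_apply, neg_le_neg_iff] at h1 h2
      rw [← hψv]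
      linarith
  have hFaconst : ∀ x ∈ Fa, ψ x = εa * M := edge_const Fa hFa va hva εa hεa hψva
  have hFbconst : ∀ x ∈ Fb, ψ x = εb * M := edge_const Fb hFb wb hwb εb hεb hψwb
  -- difference spans equal ker ψ
  obtain ⟨φa, hφa, hFarep⟩ := edge_rep hFa
  obtain ⟨φb, hφb, hFbrep⟩ := edge_rep hFb
  have hdima : setDim2 Fa = 1 := by obtain ⟨_, _, _, h⟩ := hFa; exact h
  have hdimb : setDim2 Fb = 1 := by obtain ⟨_, _, _, h⟩ := hFb; exact h
  have hspana : DF Fa = LinearMap.ker ψ := by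
    apply Submodule.eq_of_le_of_finrank_le (DF_le_ker hFaconst)
    rw [← setDim2_eq_finrank_DF, hdima]
    exact finrank_ker_dotL_le hc
  have hspanb : DF Fb = LinearMap.ker ψ := by
    apply Submodule.eq_of_le_of_finrank_le (DF_le_ker hFbconst)
    rw [← setDim2_eq_finrank_DF, hdimb]
    exact finrank_ker_dotL_le hc
  -- φa is constant on Fa, hence kills ker ψ
  have hφaconst : ∀ x ∈ Fa, φa x = φa va := by
    intro x hx
    rw [hFarep] at hx
    have h1 := hx.2 va hvaS
    have h2 : φa x ≤ φa va := by
      rw [hFarep] at hva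
      exact hva.1.2 x hx.1
    linarith
  have hφbconst : ∀ x ∈ Fb, φb x = φb wb := by
    intro x hx
    rw [hFbrep] at hx
    have h1 := hx.2 wb hwbS
    have h2 : φb x ≤ φb wb := by
      rw [hFbrep] at hwb
      exact hwb.1.2 x hx.1
    linarith
  have hφaker : ∀ d ∈ LinearMap.ker ψ, φa d = 0 := by
    intro d hd
    rw [← hspana] at hd
    have : DF Fa ≤ LinearMap.ker φa := DF_le_ker hφaconst
    exact LinearMap.mem_ker.1 (this hd)
  have hφbker : ∀ d ∈ LinearMap.ker ψ, φb d = 0 := by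
    intro d hd
    rw [← hspanb] at hd
    have : DF Fb ≤ LinearMap.ker φb := DF_le_ker hφbconst
    exact LinearMap.mem_ker.1 (this hd)
  -- now split on the relative sign
  have hεab : εb = εa ∨ εb = -εa := by
    rcases hεa with rfl | rfl <;> rcases hεb with rfl | rfl <;> simp
  rcases hεab with hcase | hcase
  · -- Fb = Fa, contradiction
    apply hne
    apply Set.Subset.antisymm
    · intro x hx
      have hxS : x ∈ S := edge_subset hFb hx
      have hψx : ψ x = ψ va := by rw [hFbconst x hx, hcase, hψva]
      have hker : x - va ∈ LinearMap.ker ψ := by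
        rw [LinearMap.mem_ker, map_sub, hψx, sub_self]
      have hφax : φa x = φa va := by
        have := hφaker _ hker
        rw [map_sub] at this
        linarith
      rw [hFarep]
      refine ⟨hxS, fun y hy => ?_⟩
      rw [hφax]
      rw [hFarep] at hva
      exact hva.1.2 y hy
    · intro x hx
      have hxS : x ∈ S := edge_subset hFa hx
      have hψx : ψ x = ψ wb := by
        rw [hFaconst x hx, ← hcase, hψwb]
      have hker : x - wb ∈ LinearMap.ker ψ := by
        rw [LinearMap.mem_ker, map_sub, hψx, sub_self]
      have hφbx : φb x = φb wb := by
        have := hφbker _ hker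
        rw [map_sub] at this
        linarith
      rw [hFbrep]
      refine ⟨hxS, fun y hy => ?_⟩
      rw [hφbx]
      rw [hFbrep] at hwb
      exact hwb.1.2 y hy
  · -- Fb = -Fa, contradiction
    apply hnne
    apply Set.Subset.antisymm
    · intro x hx
      have hxS : x ∈ S := edge_subset hFb hx
      have hψnx : ψ (-x) = ψ va := by
        rw [map_neg, hFbconst x hx, hcase, hψva]; ring
      have hker : -x - va ∈ LinearMap.ker ψ := by
        rw [LinearMap.mem_ker, map_sub, hψnx, sub_self]
      have hφax : φa (-x) = φa va := by
        have := hφaker _ hker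
        rw [map_sub] at this
        linarith
      rw [Set.mem_neg, hFarep]
      refine ⟨hnegmem x hxS, fun y hy => ?_⟩
      rw [hφax]
      rw [hFarep] at hva
      exact hva.1.2 y hy
    · intro x hx
      rw [Set.mem_neg] at hx
      have hnxS : -x ∈ S := edge_subset hFa hx
      have hxS : x ∈ S := by have := hnegmem _ hnxS; simpa using this
      have hψx : ψ x = ψ wb := by
        have := hFaconst (-x) hx
        rw [map_neg] at this
        rw [hψwb, hcase]
        linarith
      have hker : x - wb ∈ LinearMap.ker ψ := by
        rw [LinearMap.mem_ker, map_sub, hψx, sub_self]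
      have hφbx : φb x = φb wb := by
        have := hφbker _ hker
        rw [map_sub] at this
        linarith
      rw [hFbrep]
      refine ⟨hxS, fun y hy => ?_⟩
      rw [hφbx]
      rw [hFbrep] at hwb
      exact hwb.1.2 y hy

lemma lattice_comb {x pa pb : V2} (hx : IsLatticePoint x) (hpa : IsLatticePoint pa)
    (hpb : IsLatticePoint pb) (a b : ℤ) :
    IsLatticePoint (x - (a:ℝ) • pa - (b:ℝ) • pb) := by
  intro i
  obtain ⟨xi, hxi⟩ := hx i
  obtain ⟨pai, hpai⟩ := hpa i
  obtain ⟨pbi, hpbi⟩ := hpb i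
  refine ⟨xi - a * pai - b * pbi, ?_⟩
  simp only [Pi.sub_apply, Pi.smul_apply, smul_eq_mul, hxi, hpai, hpbi]
  push_cast
  ring

/-- The main lemma : relative interior lattice points of two distinct non-opposite edges
form a basis of the lattice. -/
lemma main_basis (hconv : Convex ℝ S) (hsymm : S = -S) (h0 : 0 ∈ interior S)
    (hlat : ∀ x : V2, IsLatticePoint x → x ∈ interior S → x = 0)
    {Fa Fb : Set V2} (hFa : IsEdge S Fa) (hFb : IsEdge S Fb)
    (hne : Fb ≠ Fa) (hnne : Fb ≠ -Fa)
    {pa pb : V2} (hpaR : RelP pa Fa) (hpbR : RelP pb Fb)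
    (hpaL : IsLatticePoint pa) (hpbL : IsLatticePoint pb) :
    (∀ r s : ℝ, r • pa + s • pb = 0 → r = 0 ∧ s = 0) ∧
    (∀ x : V2, IsLatticePoint x → ∃ a b : ℤ, x = (a:ℝ) • pa + (b:ℝ) • pb) := by
  have hpaS : pa ∈ S := edge_subset hFa hpaR.1
  have hpbS : pb ∈ S := edge_subset hFb hpbR.1
  have hpa0 : pa ≠ 0 := fun h => edge_not_interior hFa hpaR.1 (h ▸ h0)
  have hpb0 : pb ≠ 0 := fun h => edge_not_interior hFb hpbR.1 (h ▸ h0)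
  -- independence
  have hindep : ∀ r s : ℝ, r • pa + s • pb = 0 → r = 0 ∧ s = 0 := by
    intro r s hrs
    by_cases hs : s = 0
    · subst hs
      simp only [zero_smul, add_zero] at hrs
      rcases smul_eq_zero.1 hrs with hr | hpa
      · exact ⟨hr, rfl⟩
      · exact absurd hpa hpa0
    by_cases hr : r = 0
    · subst hr
      simp only [zero_smul, zero_add] at hrs
      rcases smul_eq_zero.1 hrs with h | h
      · exact absurd h hs
      · exact absurd h hpb0
    exfalso
    -- pb = c • pa with c = -r/s ≠ 0
    set c : ℝ := -r / s with hcdef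
    have hc0 : c ≠ 0 := by
      rw [hcdef]
      exact div_ne_zero (neg_ne_zero.2 hr) hs
    have hpb_eq : pb = c • pa := by
      have hsp : s • pb = (-r) • pa := by
        linear_combination (norm := module) hrs
      have h2 : pb = s⁻¹ • ((-r) • pa) := by
        rw [← hsp, smul_smul, inv_mul_cancel₀ hs, one_smul]
      rw [h2, smul_smul, hcdef]
      congr 1
      field_simp
    rcases lt_trichotomy |c| 1 with hlt | heqc | hgt
    · -- pb in the interior : contradiction
      have habs : |c| + |(0:ℝ)| < 1 := by rw [abs_zero, add_zero]; exact hlt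
      have hmem : c • pa + (0:ℝ) • pa ∈ interior S :=
        combo_int hconv hsymm h0 hpaS hpaS habs
      apply edge_not_interior hFb hpbR.1
      rw [hpb_eq]
      simpa using hmem
    · rcases (abs_eq (by norm_num : (0:ℝ) ≤ 1)).1 heqc with h1 | h1
      · -- pb = pa : Fb = Fa, contradiction
        have hpb_pa : pb = pa := by rw [hpb_eq, h1, one_smul]
        apply hne
        obtain ⟨φa, hφa, hFarep⟩ := edge_rep hFa
        obtain ⟨φb, hφb, hFbrep⟩ := edge_rep hFb
        apply Set.Subset.antisymm
        · rw [hFarep]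
          apply face_subset_maxSet (edge_subset hFb) hpbR
          rw [← hFarep, hpb_pa]
          exact hpaR.1
        · rw [hFbrep]
          apply face_subset_maxSet (edge_subset hFa) hpaR
          rw [← hFbrep, ← hpb_pa]
          exact hpbR.1
      · -- pb = -pa : Fb = -Fa, contradiction
        have hpb_pa : pb = -pa := by rw [hpb_eq, h1]; module
        apply hnne
        obtain ⟨φa, hφa, hFarep⟩ := edge_rep hFa
        obtain ⟨φb, hφb, hFbrep⟩ := edge_rep hFb
        have hnFa : -Fa = MaxSet S (-φa) := by rw [hFarep]; exact neg_maxSet hsymm φa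
        have hnFb : -Fb = MaxSet S (-φb) := by rw [hFbrep]; exact neg_maxSet hsymm φb
        apply Set.Subset.antisymm
        · rw [hnFa]
          apply face_subset_maxSet (edge_subset hFb) hpbR
          rw [← hnFa, hpb_pa, Set.mem_neg, neg_neg]
          exact hpaR.1
        · intro x hx
          have hFasub : Fa ⊆ -Fb := by
            rw [hnFb]
            apply face_subset_maxSet (edge_subset hFa) hpaR
            rw [← hnFb, Set.mem_neg, ← hpb_pa]
            exact hpbR.1
          rw [Set.mem_neg] at hx
          have := hFasub hx
          rwa [Set.mem_neg, neg_neg] at this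
    · -- pa in the interior : contradiction
      have hpa_eq : pa = c⁻¹ • pb := by
        rw [hpb_eq, smul_smul, inv_mul_cancel₀ hc0, one_smul]
      have habs : |c⁻¹| + |(0:ℝ)| < 1 := by
        rw [abs_zero, add_zero, abs_inv]
        rw [inv_lt_one₀ (lt_trans one_pos hgt)]
        exact hgt
      have hmem : c⁻¹ • pb + (0:ℝ) • pb ∈ interior S :=
        combo_int hconv hsymm h0 hpbS hpbS habs
      apply edge_not_interior hFa hpaR.1
      rw [hpa_eq]
      simpa using hmem
  refine ⟨hindep, ?_⟩
  intro x hx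
  -- determinant nonzero
  have hΔ : pa 0 * pb 1 - pa 1 * pb 0 ≠ 0 := by
    intro hΔ0
    have hpane : pa 0 ≠ 0 ∨ pa 1 ≠ 0 := by
      by_contra h
      push_neg at h
      exact hpa0 (funext fun i => by fin_cases i <;> simp [h.1, h.2])
    rcases hpane with h | h
    · have hdep : (-(pb 0 / pa 0)) • pa + (1:ℝ) • pb = 0 := by
        funext i
        fin_cases i
        · show -(pb 0 / pa 0) * pa 0 + 1 * pb 0 = 0
          field_simp
          ring
        · show -(pb 0 / pa 0) * pa 1 + 1 * pb 1 = 0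
          field_simp
          nlinarith [hΔ0]
      have := (hindep _ _ hdep).2
      norm_num at this
    · have hdep : (-(pb 1 / pa 1)) • pa + (1:ℝ) • pb = 0 := by
        funext i
        fin_cases i
        · show -(pb 1 / pa 1) * pa 0 + 1 * pb 0 = 0
          field_simp
          nlinarith [hΔ0]
        · show -(pb 1 / pa 1) * pa 1 + 1 * pb 1 = 0
          field_simp
          ring
      have := (hindep _ _ hdep).2
      norm_num at this
  set Δ : ℝ := pa 0 * pb 1 - pa 1 * pb 0 with hΔdef
  set α : ℝ := (x 0 * pb 1 - x 1 * pb 0) / Δ with hαdef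
  set β : ℝ := (pa 0 * x 1 - pa 1 * x 0) / Δ with hβdef
  have hxrep : x = α • pa + β • pb := by
    funext i
    fin_cases i
    · show x 0 = α * pa 0 + β * pb 0
      rw [hαdef, hβdef]
      field_simp
      ring
    · show x 1 = α * pa 1 + β * pb 1
      rw [hαdef, hβdef]
      field_simp
      ring
  set a : ℤ := round α with hadef
  set b : ℤ := round β with hbdef
  have hg : IsLatticePoint (x - (a:ℝ) • pa - (b:ℝ) • pb) := lattice_comb hx hpaL hpbL a b
  set α' : ℝ := α - a with hα'def
  set β' : ℝ := β - b with hβ'def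
  have hgrep : x - (a:ℝ) • pa - (b:ℝ) • pb = α' • pa + β' • pb := by
    rw [hxrep, hα'def, hβ'def]
    module
  have habsa : |α'| ≤ 1/2 := by rw [hα'def, hadef]; exact abs_sub_round α
  have habsb : |β'| ≤ 1/2 := by rw [hβ'def, hbdef]; exact abs_sub_round β
  have hzero : α' = 0 ∧ β' = 0 := by
    by_cases hboth : α' = 0 ∧ β' = 0
    · exact hboth
    exfalso
    have hgint : α' • pa + β' • pb ∈ interior S := by
      by_cases hlt : |α'| + |β'| < 1
      · exact combo_int hconv hsymm h0 hpaS hpbS hlt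
      · push_neg at hlt
        have h12a : |α'| = 1/2 := by linarith [abs_nonneg α', abs_nonneg β']
        have h12b : |β'| = 1/2 := by linarith [abs_nonneg α', abs_nonneg β']
        have hα'0 : α' ≠ 0 := by intro h; rw [h, abs_zero] at h12a; linarith
        have hβ'0 : β' ≠ 0 := by intro h; rw [h, abs_zero] at h12b; linarith
        exact seg_int hconv hsymm h0 hFa hFb hne hnne hpaR hpbR hα'0 hβ'0 (by linarith)
    rw [← hgrep] at hgint
    have hzero0 := hlat _ hg hgint
    rw [hgrep] at hzero0
    exact hboth (hindep _ _ hzero0)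
  refine ⟨a, b, ?_⟩
  have hαa : α = a := by have := hzero.1; rw [hα'def] at this; linarith
  have hβb : β = b := by have := hzero.2; rw [hβ'def] at this; linarith
  rw [hxrep, hαa, hβb]

lemma dotL_coeff_add (c d x : V2) (θ : ℝ) :
    dotL (c + θ • d) x = dotL c x + θ * dotL d x := by
  simp only [dotL_apply, Pi.add_apply, Pi.smul_apply, smul_eq_mul]
  ring

lemma dotL_coeff_neg (c x : V2) : dotL (-c) x = -(dotL c x) := by
  simp only [dotL_apply, Pi.neg_apply]
  ring

lemma dotL_self_pos {c : V2} (hc : c ≠ 0) : 0 < dotL c c := by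
  rw [dotL_apply]
  have hne : c 0 ≠ 0 ∨ c 1 ≠ 0 := by
    by_contra h
    push_neg at h
    exact hc (funext fun i => by fin_cases i <;> simp [h.1, h.2])
  rcases hne with h | h
  · nlinarith [sq_nonneg (c 0), sq_nonneg (c 1), sq_pos_of_ne_zero h]
  · nlinarith [sq_nonneg (c 0), sq_nonneg (c 1), sq_pos_of_ne_zero h]

/-- If two distinct points of `V` both maximize `dotL c'` over `V`, then the max-set is
an edge of `S = convexHull V`. -/
lemma edge_of_two_max {V : Finset V2} (hV : S = convexHull ℝ (V : Set V2))
    {c' : V2} (hc' : c' ≠ 0) {p q : V2} (hp : p ∈ V) (hq : q ∈ V) (hpq : p ≠ q)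
    (hpmax : ∀ v ∈ V, dotL c' v ≤ dotL c' p) (hqmax : ∀ v ∈ V, dotL c' v ≤ dotL c' q) :
    IsEdge S (MaxSet S (dotL c')) := by
  have hbound : ∀ x ∈ S, dotL c' x ≤ dotL c' p := by
    intro x hx
    rw [hV] at hx
    have hsub : (V : Set V2) ⊆ {w | dotL c' w ≤ dotL c' p} := fun v hv => hpmax v hv
    have := convexHull_min hsub (convex_halfSpace_le (dotL c').isLinear _)
    exact this hx
  have hpS : p ∈ S := by rw [hV]; exact subset_convexHull ℝ _ hp
  have hqS : q ∈ S := by rw [hV]; exact subset_convexHull ℝ _ hq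
  have hpqval : dotL c' q = dotL c' p := le_antisymm (hpmax q hq) (hqmax p hp)
  have hpF : p ∈ MaxSet S (dotL c') := ⟨hpS, hbound⟩
  have hqF : q ∈ MaxSet S (dotL c') := ⟨hqS, fun y hy => hpqval ▸ hbound y hy⟩
  refine ⟨dotL c', dotL_ne_zero hc', rfl, ?_⟩
  have hconst : ∀ x ∈ MaxSet S (dotL c'), dotL c' x = dotL c' p := by
    intro x hx
    exact le_antisymm (hbound x hx.1) (hx.2 p hpS)
  exact le_antisymm (setDim2_le_one hc' hconst) (setDim2_pos hpF hqF hpq)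

lemma edge_exists (hpoly : ∃ V : Finset V2, S = convexHull ℝ (V : Set V2))
    (hdim : setDim2 S = 2) (h0S : (0:V2) ∈ S) {c : V2} (hc : c ≠ 0) :
    ∃ (F : Set V2) (c' : V2), c' ≠ 0 ∧ IsEdge S F ∧ F = MaxSet S (dotL c') ∧
      dotL c' c ≠ 0 := by
  obtain ⟨V, hV⟩ := hpoly
  have hVne : V.Nonempty := by
    rcases V.eq_empty_or_nonempty with rfl | h
    · rw [hV] at h0S
      simp at h0S
    · exact h
  obtain ⟨b, hbV, hbmax⟩ := Finset.exists_max_image V (dotL c) hVne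
  by_cases htie : ∃ p ∈ V, p ≠ b ∧ dotL c p = dotL c b
  · obtain ⟨p, hpV, hpb, hpval⟩ := htie
    refine ⟨MaxSet S (dotL c), c, hc, ?_, rfl, (dotL_self_pos hc).ne'⟩
    exact edge_of_two_max hV hc hpV hbV hpb (fun v hv => hpval ▸ hbmax v hv) hbmax
  · push_neg at htie
    have hstrict : ∀ p ∈ V, p ≠ b → dotL c p < dotL c b :=
      fun p hp hpb => lt_of_le_of_ne (hbmax p hp) (htie p hp hpb)
    -- choose a perpendicular direction with a point strictly above b
    have hnotall : ¬ ∀ p ∈ V, dotL (perp c) p = dotL (perp c) b := by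
      intro hall
      have hsub : (V : Set V2) ⊆ {w | dotL (perp c) w = dotL (perp c) b} :=
        fun v hv => hall v hv
      have hSsub : S ⊆ {w | dotL (perp c) w = dotL (perp c) b} := by
        rw [hV]
        exact convexHull_min hsub (convex_hyperplane (dotL (perp c)).isLinear _)
      have := setDim2_le_one (perp_ne_zero hc) (fun x hx => hSsub hx)
      omega
    push_neg at hnotall
    obtain ⟨p0, hp0V, hp0⟩ := hnotall
    set d : V2 := if dotL (perp c) b < dotL (perp c) p0 then perp c else -(perp c) with hd
    have hdc : dotL d c = 0 := by
      rw [hd]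
      split_ifs
      · exact dotL_perp c
      · rw [dotL_coeff_neg, dotL_perp, neg_zero]
    have hdp0 : dotL d b < dotL d p0 := by
      rw [hd]
      split_ifs with hcase
      · exact hcase
      · rw [dotL_coeff_neg, dotL_coeff_neg]
        rcases lt_or_gt_of_ne hp0 with h | h
        · linarith
        · exact absurd h (not_lt.2 (le_of_not_gt hcase))
    set W : Finset V2 := V.filter (fun p => dotL d b < dotL d p) with hW
    have hWne : W.Nonempty := ⟨p0, by rw [hW]; exact Finset.mem_filter.2 ⟨hp0V, hdp0⟩⟩
    set g : V2 → ℝ := fun p => (dotL c b - dotL c p) / (dotL d p - dotL d b) with hg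
    obtain ⟨p', hp'W, hp'min⟩ := Finset.exists_min_image W g hWne
    have hp'mem := hp'W
    rw [hW, Finset.mem_filter] at hp'mem
    have hp'V : p' ∈ V := hp'mem.1
    have hp'up : dotL d b < dotL d p' := hp'mem.2
    have hp'b : p' ≠ b := fun h => by rw [h] at hp'up; exact lt_irrefl _ hp'up
    set θ : ℝ := g p' with hθ
    have hθpos : 0 < θ := by
      rw [hθ, hg]
      exact div_pos (by linarith [hstrict p' hp'V hp'b]) (by linarith)
    set c' : V2 := c + θ • d with hc'
    have hbmax' : ∀ p ∈ V, dotL c' p ≤ dotL c' b := by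
      intro p hp
      rw [hc', dotL_coeff_add, dotL_coeff_add]
      by_cases hpW : dotL d b < dotL d p
      · -- p ∈ W
        have hpWmem : p ∈ W := by rw [hW]; exact Finset.mem_filter.2 ⟨hp, hpW⟩
        have hgle : θ ≤ g p := hp'min p hpWmem
        rw [hg] at hgle
        have hdpos : 0 < dotL d p - dotL d b := by linarith
        rw [le_div_iff₀ hdpos] at hgle
        linarith
      · push_neg at hpW
        rcases eq_or_ne p b with rfl | hpb
        · exact le_refl _
        · have h1 := hstrict p hp hpb
          have h2 : θ * dotL d p ≤ θ * dotL d b :=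
            mul_le_mul_of_nonneg_left hpW hθpos.le
          linarith
    have htie' : dotL c' p' = dotL c' b := by
      rw [hc', dotL_coeff_add, dotL_coeff_add]
      have : θ * (dotL d p' - dotL d b) = dotL c b - dotL c p' := by
        rw [hθ, hg]
        field_simp
        rw [mul_div_assoc, div_self (by linarith : dotL d p' - dotL d b ≠ 0), mul_one]
      linarith [this]
    have hc'c : dotL c' c ≠ 0 := by
      rw [hc', dotL_coeff_add, hdc, mul_zero, add_zero]
      exact (dotL_self_pos hc).ne'
    have hc'0 : c' ≠ 0 := by
      intro h
      rw [h] at hc'c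
      apply hc'c
      rw [dotL_apply]
      simp
    refine ⟨MaxSet S (dotL c'), c', hc'0, ?_, rfl, hc'c⟩
    exact edge_of_two_max hV hc'0 hp'V hbV hp'b
      (fun v hv => htie' ▸ hbmax' v hv) hbmax'

lemma lattice_e1 : IsLatticePoint ![(1:ℝ),0] := by
  intro i; fin_cases i
  · exact ⟨1, by norm_num⟩
  · exact ⟨0, by norm_num⟩

lemma lattice_e2 : IsLatticePoint ![(0:ℝ),1] := by
  intro i; fin_cases i
  · exact ⟨0, by norm_num⟩
  · exact ⟨1, by norm_num⟩

lemma mat_exists {p q : V2} (hpL : IsLatticePoint p) (hqL : IsLatticePoint q)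
    (hspan : ∀ x : V2, IsLatticePoint x → ∃ a b : ℤ, x = (a:ℝ) • p + (b:ℝ) • q) :
    ∃ M : Matrix (Fin 2) (Fin 2) ℤ, IsUnit M.det ∧
      (M.map (Int.cast : ℤ → ℝ)).mulVecLin p = ![(1:ℝ),0] ∧
      (M.map (Int.cast : ℤ → ℝ)).mulVecLin q = ![(0:ℝ),1] := by
  obtain ⟨a, b, hab⟩ := hspan ![(1:ℝ),0] lattice_e1
  obtain ⟨c, d, hcd⟩ := hspan ![(0:ℝ),1] lattice_e2
  set M : Matrix (Fin 2) (Fin 2) ℤ := ![![a, c], ![b, d]] with hM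
  set Mr : Matrix (Fin 2) (Fin 2) ℝ := ![![(a:ℝ), (c:ℝ)], ![(b:ℝ), (d:ℝ)]] with hMr
  have hmap : M.map (Int.cast : ℤ → ℝ) = Mr := by
    ext i j
    fin_cases i <;> fin_cases j <;> rfl
  set A : Matrix (Fin 2) (Fin 2) ℝ := ![![p 0, q 0], ![p 1, q 1]] with hA
  have hab0 := congrFun hab 0
  have hab1 := congrFun hab 1
  have hcd0 := congrFun hcd 0
  have hcd1 := congrFun hcd 1
  simp only [Matrix.cons_val_zero, Matrix.cons_val_one, Matrix.head_cons, Pi.add_apply,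
    Pi.smul_apply, smul_eq_mul] at hab0 hab1 hcd0 hcd1
  have hAMr : A * Mr = 1 := by
    ext i j
    rw [Matrix.mul_apply, Fin.sum_univ_two]
    fin_cases i <;> fin_cases j <;>
      simp [hA, hMr, Matrix.one_apply] <;> linarith
  have hMrA : Mr * A = 1 := mul_eq_one_comm.1 hAMr
  have hMrA0 := congrFun (congrFun hMrA 0) 0
  have hMrA1 := congrFun (congrFun hMrA 1) 0
  have hMrA2 := congrFun (congrFun hMrA 0) 1
  have hMrA3 := congrFun (congrFun hMrA 1) 1
  rw [Matrix.mul_apply, Fin.sum_univ_two] at hMrA0 hMrA1 hMrA2 hMrA3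
  simp only [hA, hMr, Matrix.cons_val', Matrix.cons_val_zero, Matrix.cons_val_one,
    Matrix.head_cons, Matrix.head_fin_const, Matrix.empty_val', Matrix.cons_val_fin_one,
    Matrix.one_apply_eq, Matrix.one_apply] at hMrA0 hMrA1 hMrA2 hMrA3
  norm_num at hMrA1 hMrA2
  -- integer coordinates
  choose pz hpz using hpL
  choose qz hqz using hqL
  set Az : Matrix (Fin 2) (Fin 2) ℤ := ![![pz 0, qz 0], ![pz 1, qz 1]] with hAz
  have hMAz : M * Az = 1 := by
    ext i j
    apply Int.cast_injective (α := ℝ)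
    rw [Matrix.mul_apply, Fin.sum_univ_two]
    push_cast
    fin_cases i <;> fin_cases j <;>
      simp [hM, hAz, Matrix.one_apply, ← hpz, ← hqz] <;>
      first
        | (rw [show ((1:ℤ):ℝ) = 1 by norm_num]; linarith)
        | linarith
  have hdet : IsUnit M.det := by
    apply IsUnit.of_mul_eq_one Az.det
    rw [← Matrix.det_mul, hMAz, Matrix.det_one]
  refine ⟨M, hdet, ?_, ?_⟩
  · funext i
    rw [hmap]
    show (Mr.mulVec p) i = _
    rw [Matrix.mulVec, dotProduct, Fin.sum_univ_two]
    fin_cases i <;> simp [hMr] <;> linarith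
  · funext i
    rw [hmap]
    show (Mr.mulVec q) i = _
    rw [Matrix.mulVec, dotProduct, Fin.sum_univ_two]
    fin_cases i <;> simp [hMr] <;> linarith

/-- Enumeration: every chosen point is among eight candidates. -/
lemma enum_uF (hconv : Convex ℝ S) (hsymm : S = -S) (h0 : 0 ∈ interior S)
    (hlat : ∀ x : V2, IsLatticePoint x → x ∈ interior S → x = 0)
    (u : Set V2 → V2)
    (hu : ∀ F, IsEdge S F → RelP (u F) F ∧ IsLatticePoint (u F))
    (husymm : ∀ F, IsEdge S F → u (-F) = -u F)
    {Fa Fb : Set V2} (hFa : IsEdge S Fa) (hFb : IsEdge S Fb)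
    (hne : Fb ≠ Fa) (hnne : Fb ≠ -Fa)
    {F : Set V2} (hF : IsEdge S F) :
    u F = u Fa ∨ u F = -u Fa ∨ u F = u Fb ∨ u F = -u Fb ∨
    u F = u Fa + u Fb ∨ u F = -(u Fa + u Fb) ∨
    u F = u Fa - u Fb ∨ u F = -(u Fa - u Fb) := by
  set p := u Fa with hp
  set q := u Fb with hq
  by_cases hFFa : F = Fa
  · exact Or.inl (by rw [hFFa])
  by_cases hFnFa : F = -Fa
  · refine Or.inr (Or.inl ?_)
    rw [hFnFa, husymm Fa hFa]
  by_cases hFFb : F = Fb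
  · exact Or.inr (Or.inr (Or.inl (by rw [hFFb])))
  by_cases hFnFb : F = -Fb
  · refine Or.inr (Or.inr (Or.inr (Or.inl ?_)))
    rw [hFnFb, husymm Fb hFb]
  -- the generic case
  have hmainAB := main_basis hconv hsymm h0 hlat hFa hFb hne hnne
    (hu Fa hFa).1 (hu Fb hFb).1 (hu Fa hFa).2 (hu Fb hFb).2
  have hindep := hmainAB.1
  obtain ⟨a, b, hx2⟩ := hmainAB.2 (u F) (hu F hF).2
  -- b = ±1
  have hb : b = 1 ∨ b = -1 := by
    have hmainAF := main_basis hconv hsymm h0 hlat hFa hF hFFa hFnFa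
      (hu Fa hFa).1 (hu F hF).1 (hu Fa hFa).2 (hu F hF).2
    obtain ⟨m, n, hq2⟩ := hmainAF.2 q (hu Fb hFb).2
    rw [hx2] at hq2
    have hcomb : ((m:ℝ) + (n:ℝ)*(a:ℝ)) • p + ((n:ℝ)*(b:ℝ) - 1) • q = 0 := by
      linear_combination (norm := module) -hq2
    have h2 := (hindep _ _ hcomb).2
    have hcast : ((n*b : ℤ):ℝ) = ((1:ℤ):ℝ) := by push_cast; linarith
    have hnb : n * b = 1 := by exact_mod_cast hcast
    have : IsUnit b := IsUnit.of_mul_eq_one (a := b) n (by linarith [mul_comm n b])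
    exact Int.isUnit_iff.1 this
  have ha : a = 1 ∨ a = -1 := by
    have hbne : F ≠ Fb := hFFb
    have hbnne : F ≠ -Fb := hFnFb
    have hmainBF := main_basis hconv hsymm h0 hlat hFb hF hbne hbnne
      (hu Fb hFb).1 (hu F hF).1 (hu Fb hFb).2 (hu F hF).2
    obtain ⟨m, n, hp2⟩ := hmainBF.2 p (hu Fa hFa).2
    rw [hx2] at hp2
    have hcomb : ((n:ℝ)*(a:ℝ) - 1) • p + ((m:ℝ) + (n:ℝ)*(b:ℝ)) • q = 0 := by
      linear_combination (norm := module) -hp2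
    have h2 := (hindep _ _ hcomb).1
    have hcast : ((n*a : ℤ):ℝ) = ((1:ℤ):ℝ) := by push_cast; linarith
    have hna : n * a = 1 := by exact_mod_cast hcast
    have : IsUnit a := IsUnit.of_mul_eq_one (a := a) n (by linarith [mul_comm n a])
    exact Int.isUnit_iff.1 this
  rcases ha with rfl | rfl <;> rcases hb with rfl | rfl
  · refine Or.inr (Or.inr (Or.inr (Or.inr (Or.inl ?_))))
    rw [hx2]; push_cast; module
  · refine Or.inr (Or.inr (Or.inr (Or.inr (Or.inr (Or.inr (Or.inl ?_))))))
    rw [hx2]; push_cast; module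
  · refine Or.inr (Or.inr (Or.inr (Or.inr (Or.inr (Or.inr (Or.inr ?_))))))
    rw [hx2]; push_cast; module
  · refine Or.inr (Or.inr (Or.inr (Or.inr (Or.inr (Or.inl ?_)))))
    rw [hx2]; push_cast; module

/-- Exclusion: `p+q` and `p-q` cannot both be chosen points. -/
lemma excl (hconv : Convex ℝ S) (hsymm : S = -S) (h0 : 0 ∈ interior S)
    (hlat : ∀ x : V2, IsLatticePoint x → x ∈ interior S → x = 0)
    (u : Set V2 → V2)
    (hu : ∀ F, IsEdge S F → RelP (u F) F ∧ IsLatticePoint (u F))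
    (husymm : ∀ F, IsEdge S F → u (-F) = -u F)
    {Fa Fb : Set V2} (hFa : IsEdge S Fa) (hFb : IsEdge S Fb)
    (hindep : ∀ r s : ℝ, r • (u Fa) + s • (u Fb) = 0 → r = 0 ∧ s = 0)
    {F3 F4 : Set V2} (hF3 : IsEdge S F3) (hF4 : IsEdge S F4)
    (h3 : u F3 = u Fa + u Fb) (h4 : u F4 = u Fa - u Fb) : False := by
  set p := u Fa with hp
  set q := u Fb with hq
  have hp0 : p ≠ 0 := by
    intro h
    apply edge_not_interior hFa (hu Fa hFa).1.1
    rw [← hp] at *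
    rw [h]
    exact h0
  have hq0 : q ≠ 0 := by
    intro h
    apply edge_not_interior hFb (hu Fb hFb).1.1
    rw [← hq] at *
    rw [h]
    exact h0
  have hne34 : F4 ≠ F3 := by
    intro h
    rw [h, h3] at h4
    have : q = 0 := by
      have h2 : (2:ℝ) • q = 0 := by linear_combination (norm := module) h4
      have := smul_eq_zero.1 h2
      rcases this with h' | h'
      · norm_num at h'
      · exact h'
    exact hq0 this
  have hnne34 : F4 ≠ -F3 := by
    intro h
    have : u F4 = -u F3 := by rw [h, husymm F3 hF3]
    rw [h3, h4] at this
    have hp2 : (2:ℝ) • p = 0 := by linear_combination (norm := module) this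
    rcases smul_eq_zero.1 hp2 with h' | h'
    · norm_num at h'
    · exact hp0 h'
  have hmain34 := main_basis hconv hsymm h0 hlat hF3 hF4 hne34 hnne34
    (hu F3 hF3).1 (hu F4 hF4).1 (hu F3 hF3).2 (hu F4 hF4).2
  obtain ⟨a, b, hrep⟩ := hmain34.2 p (hu Fa hFa).2
  rw [h3, h4] at hrep
  have hcomb : ((a:ℝ) + (b:ℝ) - 1) • p + ((a:ℝ) - (b:ℝ)) • q = 0 := by
    linear_combination (norm := module) -hrep
  have h1 := (hindep _ _ hcomb).1
  have h2 := (hindep _ _ hcomb).2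
  have hab1 : a + b = 1 := by exact_mod_cast (by push_cast; linarith : ((a+b:ℤ):ℝ) = ((1:ℤ):ℝ))
  have hab2 : a = b := by exact_mod_cast (by push_cast; linarith : ((a:ℤ):ℝ) = ((b:ℤ):ℝ))
  omega

lemma lattice_add {p q : V2} (hp : IsLatticePoint p) (hq : IsLatticePoint q) :
    IsLatticePoint (p + q) := by
  intro i
  obtain ⟨a, ha⟩ := hp i
  obtain ⟨b, hb⟩ := hq i
  exact ⟨a + b, by simp [ha, hb]⟩

lemma DF_maxSet_le_ker (ψ : V2 →ₗ[ℝ] ℝ) :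
    DF (MaxSet S ψ) ≤ LinearMap.ker ψ := by
  rw [DF, Submodule.span_le]
  rintro x ⟨a, ha, b, hb, rfl⟩
  have h1 := ha.2 b hb.1
  have h2 := hb.2 a ha.1
  have : ψ a = ψ b := le_antisymm h2 h1
  simp [LinearMap.mem_ker, this]

lemma DF_neg (F : Set V2) : DF (-F) = DF F := by
  unfold DF
  rw [diff_set_neg]

/-- The hexagon case. -/
lemma hex_case (hconv : Convex ℝ S) (hsymm : S = -S) (h0 : 0 ∈ interior S)
    (hlat : ∀ x : V2, IsLatticePoint x → x ∈ interior S → x = 0)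
    (u : Set V2 → V2)
    (hu : ∀ F, IsEdge S F → RelP (u F) F ∧ IsLatticePoint (u F))
    (husymm : ∀ F, IsEdge S F → u (-F) = -u F)
    {Fa Fb F3 : Set V2} (hFa : IsEdge S Fa) (hFb : IsEdge S Fb)
    (hne : Fb ≠ Fa) (hnne : Fb ≠ -Fa) (hF3 : IsEdge S F3)
    (h3 : u F3 = u Fa + u Fb) :
    ∃ M : Matrix (Fin 2) (Fin 2) ℤ, IsUnit M.det ∧
      ((fun x : Fin 2 → ℝ => fun i => ∑ j, (M i j : ℝ) * x j) ''
          convexHull ℝ {x | ∃ F, IsEdge S F ∧ x = u F}) =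
        convexHull ℝ {![(1 : ℝ), 0], ![(0 : ℝ), 1], ![(-1 : ℝ), 1],
          ![(-1 : ℝ), 0], ![(0 : ℝ), -1], ![(1 : ℝ), -1]} := by
  set p := u Fa with hp
  set q := u Fb with hq
  have hmainAB := main_basis hconv hsymm h0 hlat hFa hFb hne hnne
    (hu Fa hFa).1 (hu Fb hFb).1 (hu Fa hFa).2 (hu Fb hFb).2
  have hindep := hmainAB.1
  have hspan := hmainAB.2
  have hUeq : {x | ∃ F, IsEdge S F ∧ x = u F} = {p, -p, q, -q, p+q, -(p+q)} := by
    ext x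
    constructor
    · rintro ⟨F, hF, rfl⟩
      rcases enum_uF hconv hsymm h0 hlat u hu husymm hFa hFb hne hnne hF with
        h|h|h|h|h|h|h|h
      · simp [h, hp, hq]
      · simp [h, hp, hq]
      · simp [h, hp, hq]
      · simp [h, hp, hq]
      · simp [h, hp, hq]
      · simp [h, hp, hq]
      · exact absurd h3 (fun _ =>
          excl hconv hsymm h0 hlat u hu husymm hFa hFb hindep hF3 hF h3 h)
      · exfalso
        apply excl hconv hsymm h0 hlat u hu husymm hFa hFb hindep hF3
          (neg_edge hsymm hF) h3
        rw [husymm F hF, h, neg_neg]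
    · intro hx
      simp only [Set.mem_insert_iff, Set.mem_singleton_iff] at hx
      rcases hx with rfl|rfl|rfl|rfl|rfl|rfl
      · exact ⟨Fa, hFa, rfl⟩
      · exact ⟨-Fa, neg_edge hsymm hFa, (husymm Fa hFa).symm⟩
      · exact ⟨Fb, hFb, rfl⟩
      · exact ⟨-Fb, neg_edge hsymm hFb, (husymm Fb hFb).symm⟩
      · exact ⟨F3, hF3, h3.symm⟩
      · refine ⟨-F3, neg_edge hsymm hF3, ?_⟩
        rw [husymm F3 hF3, h3]
  have hspan' : ∀ x : V2, IsLatticePoint x →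
      ∃ a b : ℤ, x = (a:ℝ) • p + (b:ℝ) • (p + q) := by
    intro x hx
    obtain ⟨a, b, hab⟩ := hspan x hx
    refine ⟨a - b, b, ?_⟩
    rw [hab]
    push_cast
    module
  obtain ⟨M, hdet, hMp, hMpq⟩ := mat_exists (hu Fa hFa).2
    (lattice_add (hu Fa hFa).2 (hu Fb hFb).2) hspan'
  refine ⟨M, hdet, ?_⟩
  have hfun : (fun x : V2 => fun i => ∑ j, ((M i j : ℝ)) * x j)
      = ⇑((M.map (Int.cast : ℤ → ℝ)).mulVecLin) := by
    funext x i
    simp [Matrix.mulVecLin_apply, Matrix.mulVec, dotProduct, Matrix.map_apply]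
  rw [hfun, hUeq, LinearMap.image_convexHull]
  congr 1
  set L := (M.map (Int.cast : ℤ → ℝ)).mulVecLin with hL
  have h1 : L p = ![(1:ℝ),0] := hMp
  have h5 : L (p + q) = ![(0:ℝ),1] := hMpq
  have h2 : L q = ![(-1:ℝ),1] := by
    have hqeq : q = (p + q) - p := by abel
    rw [hqeq, map_sub, h5, h1]
    funext i; fin_cases i <;> simp
  have h3' : L (-p) = ![(-1:ℝ),0] := by
    rw [map_neg, h1]; funext i; fin_cases i <;> simp
  have h4 : L (-q) = ![(1:ℝ),-1] := by
    rw [map_neg, h2]; funext i; fin_cases i <;> simp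
  have h6 : L (-(p+q)) = ![(0:ℝ),-1] := by
    rw [map_neg, h5]; funext i; fin_cases i <;> simp
  rw [Set.image_insert_eq, Set.image_insert_eq, Set.image_insert_eq, Set.image_insert_eq,
    Set.image_insert_eq, Set.image_singleton, h1, h2, h3', h4, h5, h6]
  ext z
  simp only [Set.mem_insert_iff, Set.mem_singleton_iff]
  tauto

end MPC

open MPC in
/-- Let `S ⊆ ℝ²` be a `0`-symmetric convex polygon of dimension `2` whose only interior
lattice point is the origin and which has a lattice point on its boundary, and which is
maximal: every edge contains a lattice point in its relative interior.  Choose on each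
edge `F` a lattice point `u F` in its relative interior so that `u (-F) = - u F`, and let
`Q` be the convex hull of the chosen points.  Then some change of basis of the lattice
`ℤ²` (an integer matrix with invertible determinant) takes `Q` to the square with vertices
`(1,0), (0,1), (-1,0), (0,-1)` or to the hexagon with vertices
`(1,0), (0,1), (-1,1), (-1,0), (0,-1), (1,-1)`. -/
theorem maximal_polygon_classification (S : Set (Fin 2 → ℝ))
    (hpoly : ∃ V : Finset (Fin 2 → ℝ), S = convexHull ℝ (V : Set (Fin 2 → ℝ)))
    (hsymm : S = -S)
    (hdim : setDim2 S = 2)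
    (hint : {x : Fin 2 → ℝ | IsLatticePoint x ∧ x ∈ interior S} = {0})
    (hbd : ∃ x : Fin 2 → ℝ, IsLatticePoint x ∧ x ∈ frontier S)
    (hmax : ∀ F, IsEdge S F → ∃ x ∈ intrinsicInterior ℝ F, IsLatticePoint x)
    (u : Set (Fin 2 → ℝ) → (Fin 2 → ℝ))
    (hu : ∀ F, IsEdge S F → u F ∈ intrinsicInterior ℝ F ∧ IsLatticePoint (u F))
    (husymm : ∀ F, IsEdge S F → u (-F) = -u F) :
    ∃ M : Matrix (Fin 2) (Fin 2) ℤ, IsUnit M.det ∧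
      (((fun x : Fin 2 → ℝ => fun i => ∑ j, (M i j : ℝ) * x j) ''
          convexHull ℝ {x | ∃ F, IsEdge S F ∧ x = u F}) =
        convexHull ℝ {![(1 : ℝ), 0], ![(0 : ℝ), 1], ![(-1 : ℝ), 0], ![(0 : ℝ), -1]} ∨
      ((fun x : Fin 2 → ℝ => fun i => ∑ j, (M i j : ℝ) * x j) ''
          convexHull ℝ {x | ∃ F, IsEdge S F ∧ x = u F}) =
        convexHull ℝ {![(1 : ℝ), 0], ![(0 : ℝ), 1], ![(-1 : ℝ), 1],
          ![(-1 : ℝ), 0], ![(0 : ℝ), -1], ![(1 : ℝ), -1]}) := by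
  classical
  have hconv : Convex ℝ S := by
    obtain ⟨V, hV⟩ := hpoly
    rw [hV]
    exact convex_convexHull ℝ _
  have h0 : (0 : Fin 2 → ℝ) ∈ interior S := by
    have h00 : (0 : Fin 2 → ℝ) ∈ ({0} : Set (Fin 2 → ℝ)) := rfl
    rw [← hint] at h00
    exact h00.2
  have hlat : ∀ x : Fin 2 → ℝ, IsLatticePoint x → x ∈ interior S → x = 0 := by
    intro x hx hxi
    have : x ∈ {x : Fin 2 → ℝ | IsLatticePoint x ∧ x ∈ interior S} := ⟨hx, hxi⟩
    rw [hint] at this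
    exact this
  have h0S : (0 : Fin 2 → ℝ) ∈ S := interior_subset h0
  have hu' : ∀ F, IsEdge S F → RelP (u F) F ∧ IsLatticePoint (u F) :=
    fun F hF => ⟨relP_of_intrinsicInterior (hu F hF).1, (hu F hF).2⟩
  -- find two non-opposite edges
  have h10 : (![(1:ℝ),0] : V2) ≠ 0 := by
    intro h
    have := congrFun h 0
    norm_num at this
  obtain ⟨F1, c1, hc1, hF1, hF1rep, -⟩ := edge_exists hpoly hdim h0S h10
  have hdim1 : setDim2 F1 = 1 := by obtain ⟨_, _, _, h⟩ := hF1; exact h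
  have hDF1 : DF F1 ≠ ⊥ := by
    intro h
    rw [setDim2_eq_finrank_DF, h, finrank_bot] at hdim1
    omega
  obtain ⟨e, heDF, he0⟩ := Submodule.ne_bot_iff _ |>.1 hDF1
  obtain ⟨F2, c2, hc2, hF2, hF2rep, hc2e⟩ := edge_exists hpoly hdim h0S he0
  have hF2ne : F2 ≠ F1 := by
    intro h
    apply hc2e
    have : e ∈ LinearMap.ker (dotL c2) := by
      apply DF_maxSet_le_ker (dotL c2)
      rw [← hF2rep, h]
      exact heDF
    simpa [LinearMap.mem_ker] using this
  have hF2nne : F2 ≠ -F1 := by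
    intro h
    apply hc2e
    have hDF2 : DF F2 = DF F1 := by rw [h, DF_neg]
    have : e ∈ LinearMap.ker (dotL c2) := by
      apply DF_maxSet_le_ker (dotL c2)
      rw [← hF2rep, hDF2]
      exact heDF
    simpa [LinearMap.mem_ker] using this
  set p := u F1 with hp
  set q := u F2 with hq
  have hmainAB := main_basis hconv hsymm h0 hlat hF1 hF2 hF2ne hF2nne
    (hu' F1 hF1).1 (hu' F2 hF2).1 (hu' F1 hF1).2 (hu' F2 hF2).2
  have hindep := hmainAB.1
  have hspan := hmainAB.2
  by_cases hsq : ∀ F, IsEdge S F → u F = p ∨ u F = -p ∨ u F = q ∨ u F = -q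
  · -- square case
    have hUeq : {x | ∃ F, IsEdge S F ∧ x = u F} = {p, -p, q, -q} := by
      ext x
      constructor
      · rintro ⟨F, hF, rfl⟩
        rcases hsq F hF with h|h|h|h <;> simp [h]
      · intro hx
        simp only [Set.mem_insert_iff, Set.mem_singleton_iff] at hx
        rcases hx with rfl|rfl|rfl|rfl
        · exact ⟨F1, hF1, rfl⟩
        · exact ⟨-F1, neg_edge hsymm hF1, (husymm F1 hF1).symm⟩
        · exact ⟨F2, hF2, rfl⟩
        · exact ⟨-F2, neg_edge hsymm hF2, (husymm F2 hF2).symm⟩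
    obtain ⟨M, hdet, hMp, hMq⟩ := mat_exists (hu' F1 hF1).2 (hu' F2 hF2).2 hspan
    refine ⟨M, hdet, Or.inl ?_⟩
    have hfun : (fun x : Fin 2 → ℝ => fun i => ∑ j, ((M i j : ℝ)) * x j)
        = ⇑((M.map (Int.cast : ℤ → ℝ)).mulVecLin) := by
      funext x i
      simp [Matrix.mulVecLin_apply, Matrix.mulVec, dotProduct, Matrix.map_apply]
    rw [hfun, hUeq, LinearMap.image_convexHull]
    congr 1
    set L := (M.map (Int.cast : ℤ → ℝ)).mulVecLin with hL
    have h1 : L p = ![(1:ℝ),0] := hMp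
    have h2 : L q = ![(0:ℝ),1] := hMq
    have h3 : L (-p) = ![(-1:ℝ),0] := by
      rw [map_neg, h1]; funext i; fin_cases i <;> simp
    have h4 : L (-q) = ![(0:ℝ),-1] := by
      rw [map_neg, h2]; funext i; fin_cases i <;> simp
    rw [Set.image_insert_eq, Set.image_insert_eq, Set.image_insert_eq, Set.image_singleton,
      h1, h2, h3, h4]
    ext z
    simp only [Set.mem_insert_iff, Set.mem_singleton_iff]
    tauto
  · -- hexagon case
    push_neg at hsq
    obtain ⟨F0, hF0, hval1, hval2, hval3, hval4⟩ := hsq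
    have henum := enum_uF hconv hsymm h0 hlat u hu' husymm hF1 hF2 hF2ne hF2nne hF0
    have hF2ne' : -F2 ≠ F1 := by
      intro h
      apply hF2nne
      rw [← h, neg_neg]
    have hF2nne' : -F2 ≠ -F1 := by
      intro h
      apply hF2ne
      have := congrArg (fun A : Set (Fin 2 → ℝ) => -A) h
      simpa using this
    rcases henum with h|h|h|h|h|h|h|h
    · exact absurd h hval1
    · exact absurd h hval2
    · exact absurd h hval3
    · exact absurd h hval4
    · obtain ⟨M, hdet, himg⟩ := hex_case hconv hsymm h0 hlat u hu' husymm
        hF1 hF2 hF2ne hF2nne hF0 h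
      exact ⟨M, hdet, Or.inr himg⟩
    · obtain ⟨M, hdet, himg⟩ := hex_case hconv hsymm h0 hlat u hu' husymm
        hF1 hF2 hF2ne hF2nne (neg_edge hsymm hF0)
        (by rw [husymm F0 hF0, h, neg_neg])
      exact ⟨M, hdet, Or.inr himg⟩
    · obtain ⟨M, hdet, himg⟩ := hex_case hconv hsymm h0 hlat u hu' husymm
        hF1 (neg_edge hsymm hF2) hF2ne' hF2nne' hF0
        (by rw [husymm F2 hF2, h]; module)
      exact ⟨M, hdet, Or.inr himg⟩
    · obtain ⟨M, hdet, himg⟩ := hex_case hconv hsymm h0 hlat u hu' husymm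
        hF1 (neg_edge hsymm hF2) hF2ne' hF2nne' (neg_edge hsymm hF0)
        (by rw [husymm F0 hF0, h, husymm F2 hF2]; module)
      exact ⟨M, hdet, Or.inr himg⟩
end
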